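/- arXiv:1303.3704 — 4 statements merged into one kernel-verified Lean document; each statement's English description precedes it below -/
import Mathlib

section
/- Let κ be an infinite cardinal and ∂ a cardinal with κ < ∂ ≤ 2^κ, and let ⟨W_i : i < κ⟩ be a sequence of finite subsets of κ. Then there exist a symmetric function f : [∂]² → κ and a sequence ⟨<_i : i < κ⟩ of partial orders on ∂ such that: (c) for all ζ < ξ < ∂ and i < κ, if f(ζ,ξ) ∈ W_i then ζ <_i ξ or ξ <_i ζ; and (d) for every i < κ there is a partition ⟨I_{i,ρ} : ρ ∈ 2^{W_i}⟩ of ∂ so that ζ <_i ξ if and only if there are ρ, ν ∈ 2^{W_i} with ρ lexicographically below ν, ζ ∈ I_{i,ρ} and ξ ∈ I_{i,ν}. -/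
open Cardinal

universe u v

/-- `Depth⁺(α)`: the sup of `θ⁺` over all `θ` such that there is a strictly increasing
sequence of length `θ` in `α`. -/
noncomputable def DepthPlus (α : Type u) [Preorder α] : Cardinal.{u} :=
  sSup {c | ∃ θ : Cardinal.{u}, c = Order.succ θ ∧ ∃ f : θ.ord.ToType → α, StrictMono f}

/-- `Depth(α)`: the sup of `θ` over all `θ` such that there is a strictly increasing
sequence of length `θ` in `α`. -/
noncomputable def DepthBA (α : Type u) [Preorder α] : Cardinal.{u} :=
  sSup {θ : Cardinal.{u} | ∃ f : θ.ord.ToType → α, StrictMono f}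

/-- `Length⁺(α)`: the sup of `θ⁺` over all `θ` such that there is a subset of `α` of
cardinality `θ` linearly ordered by `≤`. -/
noncomputable def LengthPlus (α : Type u) [Preorder α] : Cardinal.{u} :=
  sSup {c | ∃ θ : Cardinal.{u}, c = Order.succ θ ∧ ∃ A : Set α, #A = θ ∧ IsChain (· ≤ ·) A}

/-- there is a strictly increasing chain of length `θ` in `α`. -/
def HasChain (α : Type u) [Preorder α] (θ : Cardinal.{u}) : Prop :=
  ∃ f : θ.ord.ToType → α, StrictMono f

/-- A regular ultrafilter. -/
def Ultrafilter.IsRegular {ι : Type u} (D : Ultrafilter ι) : Prop :=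
  ∃ W : ι → Finset ι, ∀ ζ : ι, {i | ζ ∈ W i} ∈ D

/-- The setoid of `D`-a.e. equality on a product. -/
def ultraSetoid {ι : Type u} (D : Ultrafilter ι) (T : ι → Type v) : Setoid (∀ i, T i) where
  r g h := {i | g i = h i} ∈ D
  iseqv := by
    refine ⟨fun g => ?_, fun {g h} hgh => ?_, fun {g h k} h1 h2 => ?_⟩
    · have : {i | g i = g i} = Set.univ := by ext i; simp
      show {i | g i = g i} ∈ D
      rw [this]; exact Filter.univ_mem
    · exact Filter.mem_of_superset hgh fun i hi => (hi : g i = h i).symm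
    · exact Filter.mem_of_superset (Filter.inter_mem h1 h2) fun i hi => hi.1.trans hi.2

/-- The ultraproduct `∏ B i / D`. -/
def UltraProd {ι : Type u} (D : Ultrafilter ι) (B : ι → Type v) : Type _ :=
  Quotient (ultraSetoid D B)

/-- The class of `g` in the ultraproduct. -/
def UltraProd.mk {ι : Type u} (D : Ultrafilter ι) (B : ι → Type v) (g : ∀ i, B i) :
    UltraProd D B :=
  Quotient.mk (ultraSetoid D B) g

/-- The (partial) order of the Boolean ultraproduct. -/
instance UltraProd.instPartialOrder {ι : Type u} (D : Ultrafilter ι) (B : ι → Type v)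
    [∀ i, PartialOrder (B i)] : PartialOrder (UltraProd D B) where
  le := Quotient.lift₂ (fun f g => {i | f i ≤ g i} ∈ D) (by
    intro f g f' g' hf hg
    have hf : {i | f i = f' i} ∈ D := hf
    have hg : {i | g i = g' i} ∈ D := hg
    apply propext
    constructor
    · intro h
      refine Filter.mem_of_superset (Filter.inter_mem (Filter.inter_mem hf hg) h) ?_
      rintro i ⟨⟨h1, h2⟩, h3⟩
      simp only [Set.mem_setOf_eq] at *
      rw [← h1, ← h2]; exact h3
    · intro h
      refine Filter.mem_of_superset (Filter.inter_mem (Filter.inter_mem hf hg) h) ?_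
      rintro i ⟨⟨h1, h2⟩, h3⟩
      simp only [Set.mem_setOf_eq] at *
      rw [h1, h2]; exact h3)
  le_refl := by
    refine Quotient.ind fun f => ?_
    show {i | f i ≤ f i} ∈ D
    have : {i | f i ≤ f i} = Set.univ := by ext i; simp
    rw [this]; exact Filter.univ_mem
  le_trans := by
    refine Quotient.ind fun f => Quotient.ind fun g => Quotient.ind fun h => ?_
    intro h1 h2
    exact Filter.mem_of_superset (Filter.inter_mem h1 h2) fun i hi => le_trans hi.1 hi.2
  le_antisymm := by
    refine Quotient.ind fun f => Quotient.ind fun g => ?_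
    intro h1 h2
    exact Quotient.sound (Filter.mem_of_superset (Filter.inter_mem h1 h2)
      fun i hi => le_antisymm hi.1 hi.2)

/-- The cardinality of the ultraproduct of a family of cardinals. -/
noncomputable def ultraprodCard {ι : Type u} (D : Ultrafilter ι) (lam : ι → Cardinal.{u}) :
    Cardinal.{u} :=
  #(UltraProd D (fun i => (lam i).ord.ToType))

/-- Lexicographic order on two-valued functions: `ρ <lex ν` iff at the least point where
they differ, `ρ` is `false` and `ν` is `true`. -/
def lexLt {W : Type*} [LinearOrder W] (ρ ν : W → Bool) : Prop :=
  ∃ j, (∀ k, k < j → ρ k = ν k) ∧ ρ j < ν j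


lemma lexLt_trans {W : Type*} [LinearOrder W] {a b c : W → Bool}
    (h1 : lexLt a b) (h2 : lexLt b c) : lexLt a c := by
  obtain ⟨j1, h1, h1'⟩ := h1
  obtain ⟨j2, h2, h2'⟩ := h2
  rcases lt_trichotomy j1 j2 with h | h | h
  · exact ⟨j1, fun k hk => (h1 k hk).trans (h2 k (hk.trans h)),
      by rw [h2 j1 h] at h1'; exact h1'⟩
  · subst h; exact ⟨j1, fun k hk => (h1 k hk).trans (h2 k hk), lt_trans h1' h2'⟩
  · exact ⟨j2, fun k hk => (h1 k (hk.trans h)).trans (h2 k hk), by rw [h1 j2 h]; exact h2'⟩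

lemma lexLt_irrefl {W : Type*} [LinearOrder W] (a : W → Bool) : ¬ lexLt a a := by
  rintro ⟨j, -, hj⟩; exact lt_irrefl _ hj

theorem stmt0 (κ p : Cardinal.{0}) (hκ : ℵ₀ ≤ κ) (h1 : κ < p) (h2 : p ≤ 2 ^ κ)
    (W : κ.ord.ToType → Finset κ.ord.ToType) :
    ∃ (f : p.ord.ToType → p.ord.ToType → κ.ord.ToType)
      (lt : κ.ord.ToType → p.ord.ToType → p.ord.ToType → Prop),
      (∀ a b, f a b = f b a) ∧
      (∀ i a, ¬ lt i a a) ∧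
      (∀ i a b c, lt i a b → lt i b c → lt i a c) ∧
      (∀ i a b, a ≠ b → f a b ∈ W i → lt i a b ∨ lt i b a) ∧
      (∀ i : κ.ord.ToType, ∃ I : (({j // j ∈ W i}) → Bool) → Set p.ord.ToType,
        (∀ ρ ν, ρ ≠ ν → Disjoint (I ρ) (I ν)) ∧
        (⋃ ρ, I ρ) = Set.univ ∧
        (∀ a b, lt i a b ↔ ∃ ρ ν, lexLt ρ ν ∧ a ∈ I ρ ∧ b ∈ I ν)) := by
  classical
  have hcard : #(p.ord.ToType) ≤ #(κ.ord.ToType → Bool) := by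
    rw [Cardinal.mk_ord_toType]
    have h3 : #(κ.ord.ToType → Bool) = 2 ^ κ := by
      rw [← Cardinal.power_def, Cardinal.mk_bool, Cardinal.mk_ord_toType]
    rw [h3]; exact h2
  obtain ⟨η⟩ := Cardinal.le_def _ _ |>.mp hcard
  have hk0 : Nonempty κ.ord.ToType := by
    rw [Ordinal.toType_nonempty_iff_ne_zero]
    intro h
    have hz : κ = 0 := by simpa using congrArg Ordinal.card h
    exact Cardinal.aleph0_ne_zero (le_antisymm (hz ▸ hκ) (zero_le))
  have wf : WellFounded ((· < ·) : κ.ord.ToType → κ.ord.ToType → Prop) := wellFounded_lt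
  have hne : ∀ {a b : p.ord.ToType}, a ≠ b → {j | η a j ≠ η b j}.Nonempty := by
    intro a b hab
    rcases Function.ne_iff.mp (fun h => hab (η.injective h)) with ⟨j, hj⟩
    exact ⟨j, hj⟩
  set f : p.ord.ToType → p.ord.ToType → κ.ord.ToType := fun a b =>
    if h : a = b then Classical.choice hk0 else wf.min {j | η a j ≠ η b j} (hne h) with hf
  have hmem : ∀ {a b : p.ord.ToType} (h : a ≠ b), η a (f a b) ≠ η b (f a b) := by
    intro a b h
    simp only [hf, dif_neg h]
    exact wf.min_mem _ (hne h)
  have hlt : ∀ {a b : p.ord.ToType} (h : a ≠ b) (k : κ.ord.ToType), k < f a b →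
      η a k = η b k := by
    intro a b h k hk
    simp only [hf, dif_neg h] at hk
    by_contra hc
    exact wf.not_lt_min _ hc hk
  set lt : κ.ord.ToType → p.ord.ToType → p.ord.ToType → Prop := fun i a b =>
    lexLt (fun j : {j // j ∈ W i} => η a j.1) (fun j => η b j.1) with hltdef
  refine ⟨f, lt, ?_, ?_, ?_, ?_, ?_⟩
  · intro a b
    rcases eq_or_ne a b with rfl | h
    · rfl
    · have h' : b ≠ a := h.symm
      have hset : {j | η a j ≠ η b j} = {j | η b j ≠ η a j} := by
        ext j; exact ne_comm
      simp only [hf, dif_neg h, dif_neg h']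
      congr 1
  · intro i a
    exact lexLt_irrefl _
  · intro i a b c
    exact lexLt_trans
  · intro i a b hab hW
    have hmem' := hmem hab
    have hj : f a b ∈ W i := hW
    rcases hmem'.lt_or_gt with hc | hc
    · left
      exact ⟨⟨f a b, hj⟩, fun k hk => hlt hab k.1 hk, hc⟩
    · right
      refine ⟨⟨f a b, hj⟩, fun k hk => (hlt hab k.1 hk).symm, hc⟩
  · intro i
    refine ⟨fun ρ => {a | (fun j : {j // j ∈ W i} => η a j.1) = ρ}, ?_, ?_, ?_⟩
    · intro ρ ν hρν
      rw [Set.disjoint_left]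
      intro a ha ha'
      exact hρν (ha ▸ ha')
    · ext a
      simp only [Set.mem_iUnion, Set.mem_univ, iff_true]
      exact ⟨_, rfl⟩
    · intro a b
      constructor
      · intro h
        exact ⟨_, _, h, rfl, rfl⟩
      · rintro ⟨ρ, ν, h, ha, hb⟩
        simp only [Set.mem_setOf_eq] at ha hb
        subst ha; subst hb
        exact h
end

section
/- Let λ be a singular cardinal with uncountable cofinality ∂ = cf(λ) > ℵ₀, and let ⟨u_α : α < λ⟩ be a family of finite sets. Let ⟨θ_ε : ε < ∂⟩ be an increasing continuous sequence of cardinals cofinal in λ with θ₀ = 0, θ₁ > ∂, and each θ_{ε+1} regular. Then there exist B ⊆ λ with |B| = λ, an unbounded T ⊆ ∂, finite sets r_ε (for ε ∈ T) and a finite set r_* such that: (a) for γ₀ < γ₁ both in B ∩ [θ_ε, θ_{ε+1}) with ε ∈ T, u_{γ₀} ∩ u_{γ₁} = r_ε; (b) for γ₀ ∈ B ∩ [θ_ε, θ_{ε+1}) and γ₁ ∈ B ∩ [θ_ζ, θ_{ζ+1}) with ε < ζ in T, u_{γ₀} ∩ u_{γ₁} = r_*; (c) r_{ε₀} ∩ r_{ε₁}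 = r_* for ε₀ < ε₁ in T; and (d) |B ∩ [θ_ε, θ_{ε+1})| = θ_{ε+1} for every ε ∈ T. -/
open Cardinal

universe u v

lemma myLift_mk_biUnion_le {α : Type} {ι : Type v} (f : ι → Set α) (s : Set ι) (c : Cardinal.{v})
    (h : ∀ i ∈ s, Cardinal.lift.{v} #(f i) ≤ c) :
    Cardinal.lift.{v} #(⋃ i ∈ s, f i) ≤ #s * c := by
  rw [Set.biUnion_eq_iUnion]
  rcases isEmpty_or_nonempty s with he | hne
  · rw [Set.iUnion_of_empty]; simp
  · have h2 : ⨆ i : ↥s, Cardinal.lift.{v} #(f i.1) ≤ c := ciSup_le' fun i => h i.1 i.2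
    refine (Cardinal.mk_iUnion_le_lift _).trans ?_
    rw [Cardinal.lift_uzero]
    exact mul_le_mul_right h2 _

lemma myDelta_aux {β : Type v} {α : Type} [DecidableEq α] {κ : Cardinal.{v}}
    (hreg : κ.IsRegular) (hω : ℵ₀ < κ) :
    ∀ (n : ℕ) (u : β → Finset α) (A : Set β), (∀ i ∈ A, (u i).card ≤ n) → κ ≤ #A →
    ∃ B ⊆ A, κ ≤ #B ∧ ∃ r : Finset α, ∀ i ∈ B, ∀ j ∈ B, i ≠ j → u i ∩ u j = r := by
  intro n
  induction n with
  | zero =>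
    intro u A hcard hA
    refine ⟨A, le_rfl, hA, ∅, fun i hi j hj _ => ?_⟩
    have h0 : u i = ∅ := Finset.card_eq_zero.1 (Nat.le_zero.1 (hcard i hi))
    simp [h0]
  | succ n ih =>
    intro u A hcard hA
    by_cases hex : ∃ a : α, κ ≤ #{i | i ∈ A ∧ a ∈ u i}
    · obtain ⟨a, ha⟩ := hex
      have hsub : {i | i ∈ A ∧ a ∈ u i} ⊆ A := fun i hi => hi.1
      have hcard' : ∀ i ∈ {i | i ∈ A ∧ a ∈ u i}, ((u i).erase a).card ≤ n := by
        intro i hi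
        rw [Finset.card_erase_of_mem hi.2]
        have := hcard i hi.1
        omega
      obtain ⟨B, hBA, hBκ, r, hr⟩ := ih (fun i => (u i).erase a) _ hcard' ha
      refine ⟨B, hBA.trans hsub, hBκ, insert a r, fun i hi j hj hij => ?_⟩
      have hai : a ∈ u i := (hBA hi).2
      have haj : a ∈ u j := (hBA hj).2
      have heq := hr i hi j hj hij
      ext x
      simp only [Finset.mem_inter, Finset.mem_insert]
      constructor
      · rintro ⟨hxi, hxj⟩
        by_cases hxa : x = a
        · exact Or.inl hxa
        · right
          have hx : x ∈ (u i).erase a ∩ (u j).erase a := by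
            simp [Finset.mem_erase, hxa, hxi, hxj]
          rwa [heq] at hx
      · rintro (rfl | hxr)
        · exact ⟨hai, haj⟩
        · have hx : x ∈ (u i).erase a ∩ (u j).erase a := by rw [heq]; exact hxr
          simp only [Finset.mem_inter, Finset.mem_erase] at hx
          exact ⟨hx.1.2, hx.2.2⟩
    · push_neg at hex
      obtain ⟨B, hBmax⟩ := zorn_subset
          {B : Set β | B ⊆ A ∧ ∀ i ∈ B, ∀ j ∈ B, i ≠ j → u i ∩ u j = ∅} (by
        intro c hcP hchain
        refine ⟨⋃₀ c, ⟨Set.sUnion_subset fun s hs => (hcP hs).1, ?_⟩,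
          fun s hs => Set.subset_sUnion_of_mem hs⟩
        rintro i hi j hj hij
        obtain ⟨s, hs, his⟩ := hi
        obtain ⟨t, ht, hjt⟩ := hj
        rcases eq_or_ne s t with rfl | hst
        · exact (hcP hs).2 i his j hjt hij
        · rcases hchain hs ht hst with h | h
          · exact (hcP ht).2 i (h his) j hjt hij
          · exact (hcP hs).2 i his j (h hjt) hij)
      obtain ⟨hBA, hBdisj⟩ := hBmax.1
      refine ⟨B, hBA, ?_, ∅, hBdisj⟩
      by_contra hlt
      push_neg at hlt
      have hScard : Cardinal.lift.{v} #(⋃ i ∈ B, (↑(u i) : Set α)) < κ := by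
        refine (myLift_mk_biUnion_le (fun i => (↑(u i) : Set α)) B ℵ₀ fun i _ => ?_).trans_lt
          (Cardinal.mul_lt_of_lt hreg.1 hlt hω)
        have := (Cardinal.finset_card_lt_aleph0 (u i)).le
        calc Cardinal.lift.{v} #(↑(u i) : Set α) ≤ Cardinal.lift.{v} ℵ₀ :=
              Cardinal.lift_le.2 this
          _ = ℵ₀ := Cardinal.lift_aleph0
      set S : Set α := ⋃ i ∈ B, (↑(u i) : Set α) with hSdef
      have hcover : A ⊆ B ∪ ⋃ a ∈ S, {j | j ∈ A ∧ a ∈ u j} := by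
        intro j hjA
        by_cases hjB : j ∈ B
        · exact Or.inl hjB
        · right
          have hnotP : ¬ (B ∪ {j} ⊆ A ∧
              ∀ i ∈ B ∪ {j}, ∀ i' ∈ B ∪ {j}, i ≠ i' → u i ∩ u i' = ∅) := by
            intro hmem
            exact hjB (hBmax.2 hmem Set.subset_union_left (Set.mem_union_right _ rfl))
          have hsubA : B ∪ {j} ⊆ A := Set.union_subset hBA (by simpa using hjA)
          push_neg at hnotP
          obtain ⟨i, hi, i', hi', hne, hnemp⟩ := hnotP hsubA
          have hkey : ∃ i₀ ∈ B, (u i₀ ∩ u j).Nonempty := by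
            rcases hi with hiB | hij
            · rcases hi' with hi'B | hi'j
              · exact absurd (hBdisj i hiB i' hi'B hne) hnemp.ne_empty
              · rcases Set.mem_singleton_iff.1 hi'j with rfl
                exact ⟨i, hiB, Finset.nonempty_iff_ne_empty.2 hnemp.ne_empty⟩
            · rcases Set.mem_singleton_iff.1 hij with rfl
              rcases hi' with hi'B | hi'j
              · refine ⟨i', hi'B, Finset.nonempty_iff_ne_empty.2 ?_⟩
                rw [Finset.inter_comm]; exact hnemp.ne_empty
              · rcases Set.mem_singleton_iff.1 hi'j with rfl
                exact absurd rfl hne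
          obtain ⟨i₀, hi₀B, a, hamem⟩ := hkey
          rw [Finset.mem_inter] at hamem
          have haS : a ∈ S := Set.mem_biUnion hi₀B hamem.1
          exact Set.mem_biUnion haS ⟨hjA, hamem.2⟩
      have hUcard : #(⋃ a ∈ S, {j | j ∈ A ∧ a ∈ u j}) < κ := by
        have hsup : (⨆ a : ↥S, #{j | j ∈ A ∧ (a : α) ∈ u j}) < κ :=
          Cardinal.iSup_lt_lift_of_isRegular hreg hScard (fun a => hex a)
        have h1 := Cardinal.mk_biUnion_le_lift (fun a => {j | j ∈ A ∧ a ∈ u j}) S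
        simp only [Cardinal.lift_uzero] at h1
        exact h1.trans_lt (Cardinal.mul_lt_of_lt hreg.1 hScard hsup)
      have : κ ≤ #B + #(⋃ a ∈ S, {j | j ∈ A ∧ a ∈ u j}) :=
        hA.trans ((Cardinal.mk_le_mk_of_subset hcover).trans (Cardinal.mk_union_le _ _))
      exact absurd this (not_le.2 (Cardinal.add_lt_of_lt hreg.1 hlt hUcard))

lemma myDelta_system {β : Type v} {α : Type} [DecidableEq α] {κ : Cardinal.{v}}
    (hreg : κ.IsRegular) (hω : ℵ₀ < κ) (u : β → Finset α) (A : Set β) (hA : κ ≤ #A) :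
    ∃ B ⊆ A, #B = κ ∧ ∃ r : Finset α, ∀ i ∈ B, ∀ j ∈ B, i ≠ j → u i ∩ u j = r := by
  have hAeq : A = ⋃ n : ℕ, {i | i ∈ A ∧ (u i).card = n} := by
    ext i
    simp only [Set.mem_iUnion, Set.mem_setOf_eq]
    exact ⟨fun h => ⟨(u i).card, h, rfl⟩, fun ⟨n, h, _⟩ => h⟩
  have hexn : ∃ n : ℕ, κ ≤ #{i | i ∈ A ∧ (u i).card = n} := by
    by_contra hno
    push_neg at hno
    have hsup : (⨆ n : ℕ, #{i | i ∈ A ∧ (u i).card = n}) < κ :=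
      Cardinal.iSup_lt_lift_of_isRegular hreg (by simp [hω]) hno
    have h1 := Cardinal.mk_iUnion_le_lift (fun n : ℕ => {i | i ∈ A ∧ (u i).card = n})
    simp only [Cardinal.lift_uzero, Cardinal.mk_nat, Cardinal.lift_aleph0] at h1
    have h2 : #A < κ := by
      rw [hAeq]
      exact h1.trans_lt (Cardinal.mul_lt_of_lt hreg.1 hω hsup)
    exact absurd hA (not_le.2 h2)
  obtain ⟨n, hn⟩ := hexn
  obtain ⟨B, hBA, hBκ, r, hr⟩ := myDelta_aux hreg hω n u {i | i ∈ A ∧ (u i).card = n}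
    (fun i hi => hi.2.le) hn
  obtain ⟨B', hB'B, hB'κ⟩ := Cardinal.le_mk_iff_exists_subset.1 hBκ
  exact ⟨B', fun i hi => (hBA (hB'B hi)).1, hB'κ, r,
    fun i hi j hj hij => hr i (hB'B hi) j (hB'B hj) hij⟩

lemma myLift_isRegular {c : Cardinal.{0}} (h : c.IsRegular) :
    (Cardinal.lift.{v} c).IsRegular := by
  constructor
  · simpa using h.1
  · rw [← Cardinal.lift_ord, ← Ordinal.lift_cof]
    exact Cardinal.lift_le.2 h.2

lemma myMk_Ico_ord {a b : Cardinal.{0}} (hab : a < b) (hb : ℵ₀ ≤ b) :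
    #(Set.Ico a.ord b.ord : Set Ordinal.{0}) = Cardinal.lift.{1} b := by
  have h1 : (Set.Iio a.ord : Set Ordinal) ⊆ Set.Iio b.ord :=
    fun x hx => lt_of_lt_of_le hx (Cardinal.ord_le_ord.2 hab.le)
  have hdiff : (Set.Ico a.ord b.ord : Set Ordinal) = Set.Iio b.ord \ Set.Iio a.ord := by
    ext x
    simp only [Set.mem_Ico, Set.mem_diff, Set.mem_Iio, not_lt]
    tauto
  have hkey := Cardinal.mk_diff_add_mk h1
  rw [Ordinal.mk_Iio_ordinal, Ordinal.mk_Iio_ordinal, Cardinal.card_ord, Cardinal.card_ord] at hkey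
  rw [hdiff]
  rcases lt_or_ge #(Set.Iio b.ord \ Set.Iio a.ord : Set Ordinal) (Cardinal.lift.{1} b) with h | h
  · exfalso
    have h2 : Cardinal.lift.{1} a < Cardinal.lift.{1} b := Cardinal.lift_lt.2 hab
    have h3 := Cardinal.add_lt_of_lt (by simpa using hb) h h2
    rw [hkey] at h3
    exact lt_irrefl _ h3
  · refine le_antisymm ?_ h
    rw [← hkey]
    exact le_self_add

theorem stmt2 {α : Type} [DecidableEq α] (lam d : Cardinal.{0})
    (hcof : lam.ord.cof = d) (hd0 : ℵ₀ < d) (hsing : d < lam)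
    (u : Ordinal.{0} → Finset α)
    (θ : Ordinal.{0} → Cardinal.{0})
    (hmono : StrictMonoOn θ (Set.Iio d.ord))
    (hcont : ∀ ε < d.ord, Order.IsSuccLimit ε → θ ε = sSup (θ '' Set.Iio ε))
    (hlt : ∀ ε < d.ord, θ ε < lam)
    (hcofin : ∀ c < lam, ∃ ε < d.ord, c < θ ε)
    (h0 : θ 0 = 0) (h1 : d < θ 1)
    (hreg : ∀ ε < d.ord, (θ (ε + 1)).IsRegular) :
    ∃ (B : Set Ordinal.{0}) (T : Set Ordinal.{0}) (r : Ordinal.{0} → Finset α)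
      (rs : Finset α),
      B ⊆ Set.Iio lam.ord ∧ #B = Cardinal.lift.{1} lam ∧
      T ⊆ Set.Iio d.ord ∧ (∀ ε < d.ord, ∃ ζ ∈ T, ε ≤ ζ) ∧
      (∀ ε ∈ T, ∀ γ₀ ∈ B, ∀ γ₁ ∈ B, γ₀ < γ₁ →
        γ₀ ∈ Set.Ico (θ ε).ord (θ (ε + 1)).ord → γ₁ ∈ Set.Ico (θ ε).ord (θ (ε + 1)).ord →
        u γ₀ ∩ u γ₁ = r ε) ∧
      (∀ ε ∈ T, ∀ ζ ∈ T, ε < ζ → ∀ γ₀ ∈ B, ∀ γ₁ ∈ B,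
        γ₀ ∈ Set.Ico (θ ε).ord (θ (ε + 1)).ord → γ₁ ∈ Set.Ico (θ ζ).ord (θ (ζ + 1)).ord →
        u γ₀ ∩ u γ₁ = rs) ∧
      (∀ ε₀ ∈ T, ∀ ε₁ ∈ T, ε₀ < ε₁ → r ε₀ ∩ r ε₁ = rs) ∧
      (∀ ε ∈ T, #(B ∩ Set.Ico (θ ε).ord (θ (ε + 1)).ord : Set Ordinal.{0}) =
        Cardinal.lift.{1} (θ (ε + 1))) := by
  classical
  have hlamω : ℵ₀ ≤ lam := (hd0.trans hsing).le
  have hdreg : d.IsRegular := by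
    rw [← hcof]; exact Cardinal.isRegular_cof (Cardinal.isSuccLimit_ord hlamω)
  have hdlim : Order.IsSuccLimit d.ord := Cardinal.isSuccLimit_ord hd0.le
  have hsucc : ∀ {ε : Ordinal}, ε < d.ord → ε + 1 < d.ord := by
    intro ε h
    rw [Ordinal.add_one_eq_succ]
    exact hdlim.succ_lt h
  have hmonoθ : MonotoneOn θ (Set.Iio d.ord) := hmono.monotoneOn
  have h1d : (1 : Ordinal) < d.ord := by
    rw [Cardinal.lt_ord]
    simpa using one_lt_aleph0.trans hd0
  have hθd : ∀ ε : Ordinal, 1 ≤ ε → ε < d.ord → d < θ ε := by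
    intro ε hε1 hε
    rcases eq_or_lt_of_le hε1 with rfl | hlt1
    · exact h1
    · exact h1.trans_le (hmonoθ h1d hε hε1)
  have hθinc : ∀ ε : Ordinal, ε < d.ord → θ ε < θ (ε + 1) := by
    intro ε hε
    exact hmono hε (hsucc hε) (lt_add_one ε)
  have hθsω : ∀ ε : Ordinal, ε < d.ord → ℵ₀ < θ (ε + 1) := by
    intro ε hε
    exact hd0.trans (hθd (ε + 1) (le_add_self : (1 : Ordinal) ≤ ε + 1) (hsucc hε))
  have key : ∀ ε : Ordinal.{0}, ∃ (Bε : Set Ordinal.{0}) (ρ : Finset α),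
      ε < d.ord →
      Bε ⊆ Set.Ico (θ ε).ord (θ (ε + 1)).ord ∧ #Bε = Cardinal.lift.{1} (θ (ε + 1)) ∧
      (∀ γ₀ ∈ Bε, ∀ γ₁ ∈ Bε, γ₀ ≠ γ₁ → u γ₀ ∩ u γ₁ = ρ) ∧
      (∀ γ ∈ Bε, ρ ⊆ u γ) := by
    intro ε
    by_cases hε : ε < d.ord
    · have hκreg : (Cardinal.lift.{1} (θ (ε + 1))).IsRegular := myLift_isRegular (hreg ε hε)
      have hκω : ℵ₀ < Cardinal.lift.{1} (θ (ε + 1)) := by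
        simpa using hθsω ε hε
      have hIco : Cardinal.lift.{1} (θ (ε + 1)) ≤
          #(Set.Ico (θ ε).ord (θ (ε + 1)).ord : Set Ordinal) :=
        (myMk_Ico_ord (hθinc ε hε) (hθsω ε hε).le).ge
      obtain ⟨Bε, hBsub, hBcard, ρ, hρ⟩ := myDelta_system hκreg hκω u _ hIco
      refine ⟨Bε, ρ, fun _ => ⟨hBsub, hBcard, hρ, ?_⟩⟩
      intro γ hγ
      have hns : ¬ Bε ⊆ {γ} := by
        intro hsub
        have hle := Cardinal.mk_le_mk_of_subset hsub
        rw [hBcard, Cardinal.mk_singleton] at hle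
        exact absurd (hle.trans_lt (one_lt_aleph0.trans hκω)) (lt_irrefl _)
      obtain ⟨γ', hγ', hne⟩ := Set.not_subset.1 hns
      have heq := hρ γ hγ γ' hγ' (fun h => hne (by simp [← h]))
      rw [← heq]
      exact Finset.inter_subset_left
    · exact ⟨∅, ∅, fun h => absurd h hε⟩
  choose B₀ r₀ hkey using key
  set S : Ordinal → Set α :=
    fun ε => (⋃ ζ ∈ Set.Iio ε, ⋃ γ ∈ B₀ ζ, (↑(u γ) : Set α)) ∪
      ⋃ ζ ∈ Set.Iio d.ord, (↑(r₀ ζ) : Set α) with hSdef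
  have hVbound : ∀ ζ : Ordinal, ζ < d.ord →
      Cardinal.lift.{1} #(⋃ γ ∈ B₀ ζ, (↑(u γ) : Set α)) ≤ Cardinal.lift.{1} (θ (ζ + 1)) := by
    intro ζ hζ
    have h1 := myLift_mk_biUnion_le (fun γ => (↑(u γ) : Set α)) (B₀ ζ) ℵ₀ (fun γ _ => by
      simpa using Cardinal.lift_le.2 (Cardinal.finset_card_lt_aleph0 (u γ)).le)
    rw [(hkey ζ hζ).2.1] at h1
    refine h1.trans ?_
    rw [Cardinal.mul_aleph0_eq (by simpa using (hθsω ζ hζ).le)]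
  have hSbound : ∀ ε : Ordinal, 1 ≤ ε → ε < d.ord →
      Cardinal.lift.{1} #(S ε) < Cardinal.lift.{1} (θ (ε + 1)) := by
    intro ε hε1 hε
    have hθεω : ℵ₀ ≤ θ ε := (hd0.trans (hθd ε hε1 hε)).le
    have hfirst : Cardinal.lift.{1} #(⋃ ζ ∈ Set.Iio ε, ⋃ γ ∈ B₀ ζ, (↑(u γ) : Set α)) ≤
        Cardinal.lift.{1} (θ ε) := by
      have h1 := myLift_mk_biUnion_le (fun ζ => ⋃ γ ∈ B₀ ζ, (↑(u γ) : Set α)) (Set.Iio ε)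
        (Cardinal.lift.{1} (θ ε)) (fun ζ hζ => by
          have hζd : ζ < d.ord := lt_trans hζ hε
          refine (hVbound ζ hζd).trans (Cardinal.lift_le.2 ?_)
          have hζ1 : ζ + 1 ≤ ε := by
            rw [Ordinal.add_one_eq_succ]; exact Order.succ_le_of_lt hζ
          exact hmonoθ (lt_of_le_of_lt hζ1 hε) hε hζ1)
      refine h1.trans ?_
      rw [Ordinal.mk_Iio_ordinal]
      have hεcard : Cardinal.lift.{1} ε.card ≤ Cardinal.lift.{1} (θ ε) :=
        Cardinal.lift_le.2 ((Cardinal.lt_ord.1 hε).le.trans (hθd ε hε1 hε).le)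
      calc Cardinal.lift.{1} ε.card * Cardinal.lift.{1} (θ ε)
          ≤ Cardinal.lift.{1} (θ ε) * Cardinal.lift.{1} (θ ε) :=
            mul_le_mul_left hεcard _
        _ = Cardinal.lift.{1} (θ ε) := Cardinal.mul_eq_self (by simpa using hθεω)
    have hsecond : Cardinal.lift.{1} #(⋃ ζ ∈ Set.Iio d.ord, (↑(r₀ ζ) : Set α)) ≤
        Cardinal.lift.{1} (θ ε) := by
      have h1 := myLift_mk_biUnion_le (fun ζ => (↑(r₀ ζ) : Set α)) (Set.Iio d.ord) ℵ₀
        (fun ζ _ => by simpa using Cardinal.lift_le.2 (Cardinal.finset_card_lt_aleph0 (r₀ ζ)).le)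
      refine h1.trans ?_
      rw [Ordinal.mk_Iio_ordinal, Cardinal.card_ord,
        Cardinal.mul_aleph0_eq (by simpa using hd0.le)]
      exact Cardinal.lift_le.2 (hθd ε hε1 hε).le
    have htot : Cardinal.lift.{1} #(S ε) ≤ Cardinal.lift.{1} (θ ε) := by
      rw [hSdef]
      refine (Cardinal.lift_le.2 (Cardinal.mk_union_le _ _)).trans ?_
      rw [Cardinal.lift_add]
      calc Cardinal.lift.{1} #(⋃ ζ ∈ Set.Iio ε, ⋃ γ ∈ B₀ ζ, (↑(u γ) : Set α)) +
            Cardinal.lift.{1} #(⋃ ζ ∈ Set.Iio d.ord, (↑(r₀ ζ) : Set α))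
          ≤ Cardinal.lift.{1} (θ ε) + Cardinal.lift.{1} (θ ε) := add_le_add hfirst hsecond
        _ = Cardinal.lift.{1} (θ ε) := Cardinal.add_eq_self (by simpa using hθεω)
    exact htot.trans_lt (Cardinal.lift_lt.2 (hθinc ε hε))
  set B' : Ordinal → Set Ordinal.{0} :=
    fun ε => {γ ∈ B₀ ε | ∀ x ∈ u γ, x ∈ S ε → x ∈ r₀ ε} with hB'def
  have hB'mem : ∀ {ε γ}, γ ∈ B' ε ↔ γ ∈ B₀ ε ∧ ∀ x ∈ u γ, x ∈ S ε → x ∈ r₀ ε := by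
    intro ε γ; rw [hB'def]; exact Set.mem_sep_iff
  have hB'card : ∀ ε : Ordinal, 1 ≤ ε → ε < d.ord →
      #(B' ε) = Cardinal.lift.{1} (θ (ε + 1)) := by
    intro ε hε1 hε
    obtain ⟨hBsub, hBcard, hρ, hρu⟩ := hkey ε hε
    have hsub : B' ε ⊆ B₀ ε := fun γ h => (hB'mem.1 h).1
    have hw : ∀ γ : (B₀ ε \ B' ε : Set Ordinal), ∃ x : α, x ∈ u γ ∧ x ∈ S ε ∧ x ∉ r₀ ε := by
      rintro ⟨γ, hγB, hγn⟩
      have hno : ¬ ∀ x ∈ u γ, x ∈ S ε → x ∈ r₀ ε := fun h => hγn (hB'mem.2 ⟨hγB, h⟩)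
      push_neg at hno
      exact hno
    choose w hw1 hw2 hw3 using hw
    have hinj : Function.Injective fun γ : (B₀ ε \ B' ε : Set Ordinal) =>
        (⟨w γ, hw2 γ⟩ : S ε) := by
      intro γ γ' heq
      simp only [Subtype.mk.injEq] at heq
      by_contra hne
      have hne' : (γ : Ordinal) ≠ (γ' : Ordinal) := fun h => hne (Subtype.ext h)
      have hi := hρ _ γ.2.1 _ γ'.2.1 hne'
      apply hw3 γ
      rw [← hi]
      exact Finset.mem_inter.2 ⟨hw1 γ, heq ▸ hw1 γ'⟩
    have hdiffle : #(B₀ ε \ B' ε : Set Ordinal) ≤ Cardinal.lift.{1} #(S ε) := by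
      have := Cardinal.lift_mk_le'.2 ⟨⟨_, hinj⟩⟩
      simpa [Cardinal.lift_uzero] using this
    have hsmall : #(B₀ ε \ B' ε : Set Ordinal) < Cardinal.lift.{1} (θ (ε + 1)) :=
      hdiffle.trans_lt (hSbound ε hε1 hε)
    have hkey2 := Cardinal.mk_diff_add_mk hsub
    rw [hBcard] at hkey2
    rcases lt_or_ge #(B' ε) (Cardinal.lift.{1} (θ (ε + 1))) with h | h
    · exfalso
      have := Cardinal.add_lt_of_lt (by simpa using (hθsω ε hε).le) hsmall h
      rw [hkey2] at this
      exact lt_irrefl _ this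
    · exact le_antisymm ((Cardinal.mk_le_mk_of_subset hsub).trans_eq hBcard) h
  have hdliftreg : (Cardinal.lift.{1} d).IsRegular := myLift_isRegular hdreg
  have hIco1 : Cardinal.lift.{1} d ≤ #(Set.Ico (1 : Ordinal) d.ord : Set Ordinal) := by
    have he : ((1 : Cardinal).ord) = (1 : Ordinal) := Cardinal.ord_one
    rw [← he]
    exact (myMk_Ico_ord (one_lt_aleph0.trans hd0) hd0.le).ge
  obtain ⟨T, hTsub, hTcard, rs, hTr⟩ := myDelta_system hdliftreg (by simpa using hd0) r₀
    (Set.Ico 1 d.ord) hIco1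
  have hTd : ∀ ε ∈ T, ε < d.ord := fun ε hε => (hTsub hε).2
  have hT1 : ∀ ε ∈ T, (1 : Ordinal) ≤ ε := fun ε hε => (hTsub hε).1
  have hTunb : ∀ ε < d.ord, ∃ ζ ∈ T, ε ≤ ζ := by
    intro ε hε
    by_contra hcon
    push_neg at hcon
    have hsub : T ⊆ Set.Iio ε := fun ζ hζ => hcon ζ hζ
    have hle := Cardinal.mk_le_mk_of_subset hsub
    rw [hTcard, Ordinal.mk_Iio_ordinal] at hle
    exact absurd hle (not_le.2 (Cardinal.lift_lt.2 (Cardinal.lt_ord.1 hε)))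
  set B : Set Ordinal.{0} := ⋃ ε ∈ T, B' ε with hBdef
  have hB'int : ∀ ε ∈ T, B' ε ⊆ Set.Ico (θ ε).ord (θ (ε + 1)).ord :=
    fun ε hε γ hγ => (hkey ε (hTd ε hε)).1 (hB'mem.1 hγ).1
  have hBcap : ∀ ε ∈ T, B ∩ Set.Ico (θ ε).ord (θ (ε + 1)).ord = B' ε := by
    intro ε hεT
    ext γ
    constructor
    · rintro ⟨hγB, hγI⟩
      obtain ⟨ζ, hζT, hγζ⟩ := Set.mem_iUnion₂.1 hγB
      rcases eq_or_ne ζ ε with rfl | hne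
      · exact hγζ
      · exfalso
        have hI := hB'int ζ hζT hγζ
        rcases hne.lt_or_gt with hlt' | hlt'
        · have hθle : θ (ζ + 1) ≤ θ ε := by
            have hζ1 : ζ + 1 ≤ ε := by
              rw [Ordinal.add_one_eq_succ]; exact Order.succ_le_of_lt hlt'
            exact hmonoθ (lt_of_le_of_lt hζ1 (hTd ε hεT)) (hTd ε hεT) hζ1
          exact absurd (hI.2.trans_le (Cardinal.ord_le_ord.2 hθle)) (not_lt.2 hγI.1)
        · have hθle : θ (ε + 1) ≤ θ ζ := by
            have hε1 : ε + 1 ≤ ζ := by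
              rw [Ordinal.add_one_eq_succ]; exact Order.succ_le_of_lt hlt'
            exact hmonoθ (lt_of_le_of_lt hε1 (hTd ζ hζT)) (hTd ζ hζT) hε1
          exact absurd (hγI.2.trans_le (Cardinal.ord_le_ord.2 hθle)) (not_lt.2 hI.1)
    · intro hγ
      exact ⟨Set.mem_biUnion hεT hγ, hB'int ε hεT hγ⟩
  have hBIio : B ⊆ Set.Iio lam.ord := by
    intro γ hγ
    obtain ⟨ζ, hζT, hγζ⟩ := Set.mem_iUnion₂.1 hγ
    have hI := hB'int ζ hζT hγζ
    have : (θ (ζ + 1)).ord ≤ lam.ord := Cardinal.ord_le_ord.2 (hlt _ (hsucc (hTd ζ hζT))).le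
    exact lt_of_lt_of_le hI.2 this
  have hBcard : #B = Cardinal.lift.{1} lam := by
    refine le_antisymm ?_ ?_
    · have := Cardinal.mk_le_mk_of_subset hBIio
      rwa [Ordinal.mk_Iio_ordinal, Cardinal.card_ord] at this
    · refine le_of_forall_lt fun c hc => ?_
      obtain ⟨c₀, hc₀, rfl⟩ := Cardinal.lt_lift_iff.1 hc
      obtain ⟨ε₀, hε₀, hcθ⟩ := hcofin c₀ hc₀
      obtain ⟨ζ, hζT, hζle⟩ := hTunb ε₀ hε₀
      have hc1 : c₀ < θ (ζ + 1) := by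
        refine hcθ.trans_le ((hmonoθ hε₀ (hTd ζ hζT) hζle).trans ?_)
        exact (hθinc ζ (hTd ζ hζT)).le
      have hsubB : B' ζ ⊆ B := fun γ hγ => Set.mem_biUnion hζT hγ
      calc Cardinal.lift.{1} c₀ < Cardinal.lift.{1} (θ (ζ + 1)) := Cardinal.lift_lt.2 hc1
        _ = #(B' ζ) := (hB'card ζ (hT1 ζ hζT) (hTd ζ hζT)).symm
        _ ≤ #B := Cardinal.mk_le_mk_of_subset hsubB
  refine ⟨B, T, r₀, rs, hBIio, hBcard, fun ζ hζ => hTd ζ hζ, hTunb,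
    ?_, ?_, ?_, ?_⟩
  · intro ε hεT γ₀ hγ₀B γ₁ hγ₁B hlt01 hI₀ hI₁
    have h₀ : γ₀ ∈ B' ε := by rw [← hBcap ε hεT]; exact ⟨hγ₀B, hI₀⟩
    have h₁ : γ₁ ∈ B' ε := by rw [← hBcap ε hεT]; exact ⟨hγ₁B, hI₁⟩
    exact (hkey ε (hTd ε hεT)).2.2.1 γ₀ (hB'mem.1 h₀).1 γ₁ (hB'mem.1 h₁).1 hlt01.ne
  · intro ε hεT ζ hζT hεζ γ₀ hγ₀B γ₁ hγ₁B hI₀ hI₁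
    have h₀ : γ₀ ∈ B' ε := by rw [← hBcap ε hεT]; exact ⟨hγ₀B, hI₀⟩
    have h₁ : γ₁ ∈ B' ζ := by rw [← hBcap ζ hζT]; exact ⟨hγ₁B, hI₁⟩
    obtain ⟨hγ₀0, hu₀⟩ := hB'mem.1 h₀
    obtain ⟨hγ₁0, hu₁⟩ := hB'mem.1 h₁
    have hρu₀ : r₀ ε ⊆ u γ₀ := (hkey ε (hTd ε hεT)).2.2.2 γ₀ hγ₀0
    have hρu₁ : r₀ ζ ⊆ u γ₁ := (hkey ζ (hTd ζ hζT)).2.2.2 γ₁ hγ₁0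
    have hrr : r₀ ε ∩ r₀ ζ = rs := hTr ε hεT ζ hζT hεζ.ne
    have h1' : ∀ x ∈ u γ₀, x ∈ S ζ := by
      intro x hx
      simp only [hSdef]
      refine Set.mem_union_left _ ?_
      exact Set.mem_biUnion (Set.mem_Iio.mpr hεζ)
        (Set.mem_biUnion hγ₀0 (Finset.mem_coe.mpr hx))
    have h2' : ∀ x ∈ r₀ ζ, x ∈ S ε := by
      intro x hx
      simp only [hSdef]
      exact Set.mem_union_right _
        (Set.mem_biUnion (Set.mem_Iio.mpr (hTd ζ hζT)) (Finset.mem_coe.mpr hx))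
    ext x
    simp only [Finset.mem_inter]
    constructor
    · rintro ⟨hx₀, hx₁⟩
      have hxζ : x ∈ r₀ ζ := hu₁ x hx₁ (h1' x hx₀)
      have hxε : x ∈ r₀ ε := hu₀ x hx₀ (h2' x hxζ)
      rw [← hrr]
      exact Finset.mem_inter.2 ⟨hxε, hxζ⟩
    · intro hx
      rw [← hrr] at hx
      rcases Finset.mem_inter.1 hx with ⟨hxε, hxζ⟩
      exact ⟨hρu₀ hxε, hρu₁ hxζ⟩
  · intro ε₀ h₀ ε₁ h₁ hlt'
    exact hTr ε₀ h₀ ε₁ h₁ hlt'.ne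
  · intro ε hεT
    rw [hBcap ε hεT]
    exact hB'card ε (hT1 ε hεT) (hTd ε hεT)
end

section
/- If θ is an uncountable regular cardinal and F is a family of θ-many finite sets, then there exists a finite set r and a subfamily I ⊆ F with |I| = θ such that any two distinct members x, y of I satisfy x ∩ y = r. -/
open Cardinal

universe u v

open Set

lemma deltaDisjoint {α : Type u} [DecidableEq α] (θ : Cardinal.{u}) (hreg : θ.IsRegular)
    (hθ : ℵ₀ < θ) (G : Set (Finset α)) (hG : #G = θ)
    (hB : ∀ a : α, #{s ∈ G | a ∈ s} < θ) :
    ∃ I : Set (Finset α), I ⊆ G ∧ #I = θ ∧ ∀ x ∈ I, ∀ y ∈ I, x ≠ y → x ∩ y = ∅ := by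
  classical
  set G' : Set (Finset α) := G \ {∅} with hG'def
  have hG'sub : G' ⊆ G := diff_subset
  have hG'θ : #G' = θ := by
    refine le_antisymm ((mk_le_mk_of_subset hG'sub).trans_eq hG) (le_of_not_gt fun hlt => ?_)
    have hsub : G ⊆ G' ∪ {∅} := by
      intro s hs; by_cases h : s = ∅ <;> simp [hG'def, h, hs]
    have : θ ≤ #G' + ℵ₀ := by
      calc θ = #G := hG.symm
        _ ≤ #(G' ∪ {∅} : Set (Finset α)) := mk_le_mk_of_subset hsub
        _ ≤ #G' + #({∅} : Set (Finset α)) := mk_union_le _ _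
        _ ≤ #G' + ℵ₀ := by gcongr; exact le_of_lt (lt_aleph0_of_finite _)
    exact absurd (this.trans_lt (add_lt_of_lt hreg.aleph0_le hlt hθ)) (lt_irrefl θ)
  -- Zorn: maximal pairwise disjoint subfamily of G'
  have hzorn : ∀ c ⊆ {I : Set (Finset α) | I ⊆ G' ∧ I.Pairwise Disjoint},
      IsChain (· ⊆ ·) c → ∃ ub ∈ {I : Set (Finset α) | I ⊆ G' ∧ I.Pairwise Disjoint},
      ∀ s ∈ c, s ⊆ ub := by
    intro c hc hchain
    refine ⟨⋃₀ c, ⟨?_, ?_⟩, fun s hs => subset_sUnion_of_mem hs⟩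
    · exact sUnion_subset fun I hI => (hc hI).1
    · exact (pairwise_sUnion hchain.directedOn).2 fun I hI => (hc hI).2
  obtain ⟨m, hm⟩ := zorn_subset _ hzorn
  obtain ⟨⟨hmG', hmdisj⟩, hmax⟩ := hm
  refine ⟨m, hmG'.trans hG'sub, ?_, ?_⟩
  · -- #m = θ
    refine le_antisymm ((mk_le_mk_of_subset (hmG'.trans hG'sub)).trans_eq hG)
      (le_of_not_gt fun hlt => ?_)
    -- the sets meeting some member of m are few
    set S : Set (Finset α) := {s ∈ G' | ∃ t ∈ m, ¬ Disjoint t s} with hSdef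
    have hSsub : S ⊆ ⋃ p : (Σ t : m, {a // a ∈ (t : Finset α)}), {s ∈ G | (p.2 : α) ∈ s} := by
      rintro s ⟨hsG', t, htm, hnd⟩
      rw [Finset.not_disjoint_iff] at hnd
      obtain ⟨a, hat, has⟩ := hnd
      exact mem_iUnion.2 ⟨⟨⟨t, htm⟩, ⟨a, hat⟩⟩, hG'sub hsG', has⟩
    have hScard : #S < θ := by
      refine (mk_le_mk_of_subset hSsub).trans_lt ?_
      rw [card_iUnion_lt_iff_forall_of_isRegular hreg ?_]
      · exact fun p => hB _
      · rw [mk_sigma]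
        exact sum_lt_of_isRegular hreg hlt fun t => (lt_aleph0_of_finite _).trans hθ
    have : ∃ s ∈ G', s ∉ S := by
      by_contra h
      push_neg at h
      exact absurd (hG'θ ▸ mk_le_mk_of_subset h : θ ≤ #S) hScard.not_ge
    obtain ⟨s, hsG', hsS⟩ := this
    have hsdisj : ∀ t ∈ m, Disjoint t s := by
      intro t htm
      by_contra hnd
      exact hsS ⟨hsG', t, htm, hnd⟩
    have hsm : s ∉ m := by
      intro hsm
      have := hsdisj s hsm
      rw [disjoint_self] at this
      exact hsG'.2 this
    have : insert s m ∈ {I : Set (Finset α) | I ⊆ G' ∧ I.Pairwise Disjoint} := by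
      refine ⟨insert_subset hsG' hmG', ?_⟩
      refine hmdisj.insert fun t htm hne => ?_
      exact ⟨(hsdisj t htm).symm, hsdisj t htm⟩
    exact hsm (hmax this (subset_insert s m) (mem_insert s m))
  · intro x hx y hy hxy
    rw [← Finset.disjoint_iff_inter_eq_empty]
    exact hmdisj hx hy hxy

lemma deltaAux {α : Type u} [DecidableEq α] (θ : Cardinal.{u}) (hreg : θ.IsRegular)
    (hθ : ℵ₀ < θ) : ∀ n : ℕ, ∀ G : Set (Finset α), (∀ s ∈ G, s.card ≤ n) → #G = θ →
    ∃ (r : Finset α) (I : Set (Finset α)), I ⊆ G ∧ #I = θ ∧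
      ∀ x ∈ I, ∀ y ∈ I, x ≠ y → x ∩ y = r := by
  classical
  intro n
  induction n with
  | zero =>
    intro G hcard hG
    exfalso
    have : G ⊆ {∅} := fun s hs => by
      simpa using Finset.card_eq_zero.1 (Nat.le_zero.1 (hcard s hs))
    have : #G < ℵ₀ := (mk_le_mk_of_subset this).trans_lt (lt_aleph0_of_finite _)
    rw [hG] at this
    exact absurd (this.trans hθ) (lt_irrefl θ)
  | succ n ih =>
    intro G hcard hG
    by_cases hA : ∃ a : α, θ ≤ #{s ∈ G | a ∈ s}
    · obtain ⟨a, ha⟩ := hA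
      set Ga : Set (Finset α) := {s ∈ G | a ∈ s} with hGadef
      have haGa : #Ga = θ :=
        le_antisymm ((mk_le_mk_of_subset fun s hs => hs.1).trans_eq hG) ha
      set G₂ : Set (Finset α) := (fun s => s.erase a) '' Ga with hG₂def
      have hinj : Set.InjOn (fun s => s.erase a) Ga := by
        intro s hs t ht h
        simp only at h
        rw [← Finset.insert_erase hs.2, h, Finset.insert_erase ht.2]
      have hG₂θ : #G₂ = θ := by rw [hG₂def, mk_image_eq_of_injOn _ _ hinj, haGa]
      have hG₂card : ∀ t ∈ G₂, t.card ≤ n := by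
        rintro t ⟨s, hs, rfl⟩
        have := hcard s hs.1
        rw [Finset.card_erase_of_mem hs.2]
        omega
      obtain ⟨r', I', hI'sub, hI'θ, hI'Δ⟩ := ih G₂ hG₂card hG₂θ
      refine ⟨insert a r', (fun t => insert a t) '' I', ?_, ?_, ?_⟩
      · rintro x ⟨t, htI', rfl⟩
        obtain ⟨s, hs, rfl⟩ := hI'sub htI'
        show insert a (s.erase a) ∈ G
        rw [Finset.insert_erase hs.2]
        exact hs.1
      · rw [mk_image_eq_of_injOn _ _ ?_, hI'θ]
        intro t ht u hu h
        obtain ⟨s, hs, rfl⟩ := hI'sub ht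
        obtain ⟨s', hs', rfl⟩ := hI'sub hu
        simp only at h
        show s.erase a = s'.erase a
        rw [← Finset.erase_insert (Finset.notMem_erase a s), h,
          Finset.erase_insert (Finset.notMem_erase a s')]
      · rintro x ⟨t, ht, rfl⟩ y ⟨u, hu, rfl⟩ hne
        have htu : t ≠ u := fun h => hne (by rw [h])
        have : insert a t ∩ insert a u = insert a (t ∩ u) := by
          ext b; simp only [Finset.mem_insert, Finset.mem_inter]; tauto
        rw [this, hI'Δ t ht u hu htu]
    · push_neg at hA
      obtain ⟨I, hIsub, hIθ, hIΔ⟩ := deltaDisjoint θ hreg hθ G hG hA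
      exact ⟨∅, I, hIsub, hIθ, hIΔ⟩

theorem stmt3 {α : Type u} [DecidableEq α] (θ : Cardinal.{u}) (hreg : θ.IsRegular) (hθ : ℵ₀ < θ)
    (F : Set (Finset α)) (hF : #F = θ) :
    ∃ (r : Finset α) (I : Set (Finset α)), I ⊆ F ∧ #I = θ ∧
      ∀ x ∈ I, ∀ y ∈ I, x ≠ y → x ∩ y = r := by
  classical
  have hlt : ∃ n : ℕ, ¬ #{s ∈ F | s.card = n} < θ := by
    by_contra h
    push_neg at h
    have hU : F ⊆ ⋃ n : ULift.{u} ℕ, {s ∈ F | s.card = n.down} := fun s hs =>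
      Set.mem_iUnion.2 ⟨⟨s.card⟩, hs, rfl⟩
    have hcard : #F < θ := by
      refine (mk_le_mk_of_subset hU).trans_lt ?_
      rw [card_iUnion_lt_iff_forall_of_isRegular hreg ?_]
      · exact fun n => h n.down
      · have : #(ULift.{u} ℕ) = ℵ₀ := by simp
        exact this ▸ hθ
    rw [hF] at hcard
    exact lt_irrefl θ hcard
  obtain ⟨n, hn⟩ := hlt
  have hFn : #{s ∈ F | s.card = n} = θ :=
    le_antisymm ((mk_le_mk_of_subset fun s hs => hs.1).trans_eq hF) (le_of_not_gt hn)
  obtain ⟨r, I, hIsub, hIθ, hIΔ⟩ := deltaAux θ hreg hθ n _ (fun s hs => le_of_eq hs.2) hFn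
  exact ⟨r, I, fun s hs => (hIsub hs).1, hIθ, hIΔ⟩
end

section
/- Suppose κ = cf(κ), λ > cf(λ) = κ⁺ and λ^κ = λ. Then there exist a sequence ⟨B_i : i < κ⟩ of Boolean algebras and an ultrafilter D on κ such that ∏_{i<κ} Depth⁺(B_i)/D = λ < Depth⁺(∏_{i<κ} B_i / D) = λ⁺. -/
open Cardinal

universe u v

/-! ### Auxiliary development -/

section UltraLemmas

universe w x

variable {ι : Type w} {D : Ultrafilter ι} {B : ι → Type x} [∀ i, PartialOrder (B i)]

theorem UltraProd.mk_le_mk {f g : ∀ i, B i} :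
    UltraProd.mk D B f ≤ UltraProd.mk D B g ↔ {i | f i ≤ g i} ∈ D :=
  Iff.rfl

omit [∀ i, PartialOrder (B i)] in
theorem UltraProd.mk_eq_mk {f g : ∀ i, B i} :
    UltraProd.mk D B f = UltraProd.mk D B g ↔ {i | f i = g i} ∈ D := by
  constructor
  · intro h
    exact @Quotient.exact _ (ultraSetoid D B) _ _ h
  · intro h
    exact Quotient.sound (s := ultraSetoid D B) h

theorem UltraProd.mk_lt_mk {f g : ∀ i, B i} :
    UltraProd.mk D B f < UltraProd.mk D B g ↔ {i | f i < g i} ∈ D := by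
  constructor
  · rintro ⟨hle, hnot⟩
    have h1 : {i | f i ≤ g i} ∈ D := hle
    have h2 : {i | g i ≤ f i}ᶜ ∈ D := by
      rw [Ultrafilter.compl_mem_iff_notMem]
      exact fun h => hnot h
    refine Filter.mem_of_superset (Filter.inter_mem h1 h2) ?_
    rintro i ⟨hi1, hi2⟩
    exact lt_of_le_not_ge hi1 hi2
  · intro h
    refine lt_of_le_of_ne ?_ ?_
    · exact Filter.mem_of_superset h fun i hi => le_of_lt hi
    · intro heq
      have := UltraProd.mk_eq_mk.1 heq
      obtain ⟨i, hi1, hi2⟩ := Filter.nonempty_of_mem (Filter.inter_mem h this)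
      exact absurd hi2 (ne_of_lt hi1)

end UltraLemmas

section DepthLemmas

variable {α : Type u} [Preorder α]

/-- The set of which `DepthPlus` is the supremum. -/
def chainSet (α : Type u) [Preorder α] : Set Cardinal.{u} :=
  {c | ∃ θ : Cardinal.{u}, c = Order.succ θ ∧ HasChain α θ}

theorem depthPlus_eq_sSup (α : Type u) [Preorder α] : DepthPlus α = sSup (chainSet α) := rfl

/-- A strictly monotone map between the canonical types of two ordinals. -/
theorem exists_strictMono_toType {o o' : Ordinal.{u}} (h : o ≤ o') :
    ∃ g : o.ToType → o'.ToType, StrictMono g := by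
  refine ⟨fun x => (Ordinal.ToType.mk (o := o'))
      ⟨((Ordinal.ToType.mk (o := o)).symm x).1,
        Set.mem_Iio.2 (lt_of_lt_of_le (Set.mem_Iio.1 ((Ordinal.ToType.mk (o := o)).symm x).2) h)⟩,
    fun x y hxy => ?_⟩
  rw [OrderIso.lt_iff_lt]
  have : (Ordinal.ToType.mk (o := o)).symm x < (Ordinal.ToType.mk (o := o)).symm y :=
    (OrderIso.lt_iff_lt _).2 hxy
  exact this

theorem hasChain_of_le {θ θ' : Cardinal.{u}} (h : HasChain α θ) (h' : θ' ≤ θ) : HasChain α θ' := by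
  obtain ⟨f, hf⟩ := h
  obtain ⟨g, hg⟩ := exists_strictMono_toType (Cardinal.ord_le_ord.2 h')
  exact ⟨f ∘ g, hf.comp hg⟩

theorem hasChain_zero (α : Type u) [Preorder α] : HasChain α (0 : Cardinal.{u}) := by
  haveI : IsEmpty ((0 : Cardinal.{u}).ord.ToType) := by
    rw [Ordinal.isEmpty_toType_iff, Cardinal.ord_zero]
  exact ⟨fun x => isEmptyElim x, fun a => isEmptyElim a⟩

theorem chainSet_nonempty (α : Type u) [Preorder α] : (chainSet α).Nonempty :=
  ⟨Order.succ 0, 0, rfl, hasChain_zero α⟩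

theorem card_le_of_hasChain {θ : Cardinal.{u}} (h : HasChain α θ) : θ ≤ #α := by
  obtain ⟨f, hf⟩ := h
  have : #(θ.ord.ToType) ≤ #α := Cardinal.mk_le_of_injective hf.injective
  rwa [Cardinal.mk_toType, Cardinal.card_ord] at this

theorem bddAbove_chainSet (α : Type u) [Preorder α] : BddAbove (chainSet α) := by
  refine ⟨Order.succ #α, ?_⟩
  rintro c ⟨θ, rfl, hc⟩
  exact Order.succ_le_succ (card_le_of_hasChain hc)

theorem succ_le_depthPlus_of_hasChain {θ : Cardinal.{u}} (h : HasChain α θ) :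
    Order.succ θ ≤ DepthPlus α :=
  le_csSup (bddAbove_chainSet α) ⟨θ, rfl, h⟩

theorem depthPlus_le_of_forall {c : Cardinal.{u}}
    (h : ∀ θ : Cardinal.{u}, HasChain α θ → Order.succ θ ≤ c) : DepthPlus α ≤ c := by
  refine csSup_le (chainSet_nonempty α) ?_
  rintro x ⟨θ, rfl, hθ⟩
  exact h θ hθ

theorem depthPlus_eq_of_limit {lam : Cardinal.{u}}
    (hall : ∀ θ : Cardinal.{u}, θ < lam → HasChain α θ)
    (hno : ¬ HasChain α lam) : DepthPlus α = lam := by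
  refine le_antisymm (depthPlus_le_of_forall fun θ hθ => ?_) ?_
  · rw [Order.succ_le_iff]
    by_contra h
    exact hno (hasChain_of_le hθ (not_lt.1 h))
  · refine le_of_forall_lt fun c hc => ?_
    exact lt_of_lt_of_le (Order.lt_succ c) (succ_le_depthPlus_of_hasChain (hall c hc))

end DepthLemmas


set_option linter.unusedSectionVars false

namespace Stmt7

open Cardinal Set

/-- The index type of blocks: the canonical type of cardinality `κ⁺`. -/
abbrev PP (kappa : Cardinal.{0}) : Type := (Order.succ kappa).ord.ToType

/-- A family of infinite cardinals below `lam`, cofinal in `lam`, indexed by `κ⁺`. -/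
structure Blocks (kappa lam : Cardinal.{0}) : Type 1 where
  lamf : PP kappa → Cardinal.{0}
  inf_le : ∀ ζ, ℵ₀ ≤ lamf ζ
  lt_lam : ∀ ζ, lamf ζ < lam
  cofinal : ∀ θ : Cardinal.{0}, θ < lam → ∃ ζ, θ ≤ lamf ζ

variable {kappa lam : Cardinal.{0}} (bl : Blocks kappa lam)

/-- The `ζ`-th coordinate type. -/
abbrev YY (ζ : PP kappa) : Type := (bl.lamf ζ).ord.ToType

theorem YY_nonempty (ζ : PP kappa) : Nonempty (YY bl ζ) := by
  rw [Ordinal.nonempty_toType_iff]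
  intro h
  have h0 : bl.lamf ζ = 0 := by
    have := congrArg Ordinal.card h
    rwa [Cardinal.card_ord, Ordinal.card_zero] at this
  have := bl.inf_le ζ
  rw [h0] at this
  exact Cardinal.aleph0_ne_zero (le_zero_iff.1 this)

theorem mk_YY (ζ : PP kappa) : #(YY bl ζ) = bl.lamf ζ := by
  rw [Cardinal.mk_toType, Cardinal.card_ord]

/-- The ambient boolean algebra: the full product of powersets. -/
abbrev PreB : Type := ∀ ζ : PP kappa, Set (YY bl ζ)

/-- The carrier of the finite/cofinite weak product. -/
def okSet : Set (PreB bl) :=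
  {x | {ζ | x ζ ≠ ⊥}.Finite ∨ {ζ | x ζ ≠ ⊤}.Finite}

theorem sup_mem_okSet {x y : PreB bl} (hx : x ∈ okSet bl) (hy : y ∈ okSet bl) :
    x ⊔ y ∈ okSet bl := by
  rcases hy with hy | hy
  · rcases hx with hx | hx
    · refine Or.inl ((hx.union hy).subset fun ζ hζ => ?_)
      simp only [mem_setOf_eq, mem_union] at hζ ⊢
      by_contra h
      push_neg at h
      exact hζ (by rw [Pi.sup_apply, h.1, h.2, sup_idem])
    · refine Or.inr (hx.subset fun ζ hζ => ?_)
      simp only [mem_setOf_eq] at hζ ⊢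
      intro h
      exact hζ (by rw [Pi.sup_apply, h, top_sup_eq])
  · refine Or.inr (hy.subset fun ζ hζ => ?_)
    simp only [mem_setOf_eq] at hζ ⊢
    intro h
    exact hζ (by rw [Pi.sup_apply, h, sup_top_eq])

theorem inf_mem_okSet {x y : PreB bl} (hx : x ∈ okSet bl) (hy : y ∈ okSet bl) :
    x ⊓ y ∈ okSet bl := by
  rcases hy with hy | hy
  · refine Or.inl (hy.subset fun ζ hζ => ?_)
    simp only [mem_setOf_eq] at hζ ⊢
    intro h
    exact hζ (by rw [Pi.inf_apply, h, inf_bot_eq])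
  · rcases hx with hx | hx
    · refine Or.inl (hx.subset fun ζ hζ => ?_)
      simp only [mem_setOf_eq] at hζ ⊢
      intro h
      exact hζ (by rw [Pi.inf_apply, h, bot_inf_eq])
    · refine Or.inr ((hx.union hy).subset fun ζ hζ => ?_)
      simp only [mem_setOf_eq, mem_union] at hζ ⊢
      by_contra h
      push_neg at h
      exact hζ (by rw [Pi.inf_apply, h.1, h.2, inf_idem])

theorem compl_mem_okSet {x : PreB bl} (hx : x ∈ okSet bl) : xᶜ ∈ okSet bl := by
  rcases hx with hx | hx
  · refine Or.inr (hx.subset fun ζ hζ => ?_)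
    simp only [mem_setOf_eq, Pi.compl_apply] at hζ ⊢
    intro h
    exact hζ (by rw [h, compl_bot])
  · refine Or.inl (hx.subset fun ζ hζ => ?_)
    simp only [mem_setOf_eq, Pi.compl_apply] at hζ ⊢
    intro h
    exact hζ (by rw [h, compl_top])

theorem bot_mem_okSet : (⊥ : PreB bl) ∈ okSet bl := by
  refine Or.inl ?_
  convert Set.finite_empty
  ext ζ
  simp [Pi.bot_apply]

theorem top_mem_okSet : (⊤ : PreB bl) ∈ okSet bl := by
  refine Or.inr ?_
  convert Set.finite_empty
  ext ζ
  simp [Pi.top_apply]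

/-- The finite/cofinite weak product of the powerset algebras `Set (YY bl ζ)`. -/
def MyB : Type := {x : PreB bl // x ∈ okSet bl}

namespace MyB

noncomputable instance : Max (MyB bl) := ⟨fun x y => ⟨x.1 ⊔ y.1, sup_mem_okSet bl x.2 y.2⟩⟩
noncomputable instance : Min (MyB bl) := ⟨fun x y => ⟨x.1 ⊓ y.1, inf_mem_okSet bl x.2 y.2⟩⟩
noncomputable instance : Top (MyB bl) := ⟨⟨⊤, top_mem_okSet bl⟩⟩
noncomputable instance : Bot (MyB bl) := ⟨⟨⊥, bot_mem_okSet bl⟩⟩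
noncomputable instance : Compl (MyB bl) := ⟨fun x => ⟨x.1ᶜ, compl_mem_okSet bl x.2⟩⟩
noncomputable instance : SDiff (MyB bl) :=
  ⟨fun x y => ⟨x.1 \ y.1, by
    convert inf_mem_okSet bl x.2 (compl_mem_okSet bl y.2) using 1
    exact sdiff_eq⟩⟩
noncomputable instance : HImp (MyB bl) :=
  ⟨fun x y => ⟨x.1 ⇨ y.1, by
    rw [himp_eq]
    exact sup_mem_okSet bl y.2 (compl_mem_okSet bl x.2)⟩⟩

noncomputable instance instBA : BooleanAlgebra (MyB bl) :=
  letI : LE (MyB bl) := ⟨fun x y => x.1 ≤ y.1⟩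
  letI : LT (MyB bl) := ⟨fun x y => x.1 < y.1⟩
  Subtype.val_injective.booleanAlgebra (fun x => x.1) Iff.rfl Iff.rfl
    (fun _ _ => rfl) (fun _ _ => rfl) rfl rfl (fun _ => rfl) (fun _ _ => rfl) (fun _ _ => rfl)

theorem le_iff {x y : MyB bl} : x ≤ y ↔ ∀ ζ, x.1 ζ ⊆ y.1 ζ := Iff.rfl

theorem lt_iff {x y : MyB bl} : x < y ↔ x.1 < y.1 := by
  constructor
  · rintro ⟨h1, h2⟩
    exact lt_of_le_not_ge h1 h2
  · rintro h
    exact lt_of_le_not_ge h.le fun hle => h.not_ge hle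

theorem val_bot : (⊥ : MyB bl).1 = ⊥ := rfl
theorem val_top : (⊤ : MyB bl).1 = ⊤ := rfl

end MyB

end Stmt7


namespace Stmt7

open Cardinal Set Ordinal

variable {kappa lam : Cardinal.{0}} (bl : Blocks kappa lam)

/-- The element of `MyB` supported on one coordinate. -/
noncomputable def single (ζ : PP kappa) (A : Set (YY bl ζ)) : MyB bl :=
  ⟨Function.update (⊥ : PreB bl) ζ A, by
    refine Or.inl ((Set.finite_singleton ζ).subset fun ξ hξ => ?_)
    simp only [mem_setOf_eq] at hξ
    by_contra h
    simp only [mem_singleton_iff] at h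
    exact hξ (by rw [Function.update_of_ne h]; rfl)⟩

theorem single_lt_single {ζ : PP kappa} {A A' : Set (YY bl ζ)} (hle : A ⊆ A') (hne : A ≠ A') :
    single bl ζ A < single bl ζ A' := by
  rw [MyB.lt_iff]
  refine lt_of_le_of_ne (fun ξ => ?_) ?_
  · by_cases h : ξ = ζ
    · subst h
      simp only [single, Function.update_self]
      exact hle
    · simp only [single, Function.update_of_ne h, le_refl]
  · intro h
    have := congrFun h ζ
    simp only [single, Function.update_self] at this
    exact hne this

theorem hasChain_MyB {θ : Cardinal.{0}} (hθ : θ < lam) : HasChain (MyB bl) θ := by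
  obtain ⟨ζ, hζ⟩ := bl.cofinal θ hθ
  obtain ⟨g, hg⟩ := exists_strictMono_toType (Cardinal.ord_le_ord.2 hζ)
  refine ⟨fun t => single bl ζ (Set.Iic (g t)), fun t t' htt => ?_⟩
  refine single_lt_single bl (Set.Iic_subset_Iic.2 (hg htt).le) ?_
  intro h
  have : g t' ∈ Set.Iic (g t) := h ▸ Set.mem_Iic.2 le_rfl
  exact absurd (Set.mem_Iic.1 this) (not_le.2 (hg htt))

section NoChain

/-- Abbreviation for the canonical type of `lam.ord`. -/
local notation "TT" => lam.ord.ToType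

noncomputable def nxt (hl : Order.IsSuccLimit lam.ord) (x : TT) : TT :=
  (@Ordinal.enum TT (· < ·) isWellOrder_lt)
    ⟨Order.succ ((@Ordinal.typein TT (· < ·) isWellOrder_lt) x), by
      rw [Ordinal.type_toType]
      exact hl.succ_lt (Ordinal.typein_lt_self x)⟩

theorem lt_nxt (hl : Order.IsSuccLimit lam.ord) (x : TT) : x < nxt (lam := lam) hl x := by
  have h := @Ordinal.typein_enum TT (· < ·) isWellOrder_lt
    (o := Order.succ ((@Ordinal.typein TT (· < ·) isWellOrder_lt) x))
    (by rw [Ordinal.type_toType]; exact hl.succ_lt (Ordinal.typein_lt_self x))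
  rw [← @Ordinal.typein_lt_typein TT (· < ·) isWellOrder_lt _ _] at *
  rw [nxt, h]
  exact Order.lt_succ _

theorem nxt_le (hl : Order.IsSuccLimit lam.ord) {x z : TT} (h : x < z) : nxt (lam := lam) hl x ≤ z := by
  have henum := @Ordinal.typein_enum TT (· < ·) isWellOrder_lt
    (o := Order.succ ((@Ordinal.typein TT (· < ·) isWellOrder_lt) x))
    (by rw [Ordinal.type_toType]; exact hl.succ_lt (Ordinal.typein_lt_self x))
  rw [← Ordinal.typein_le_typein' lam.ord, nxt, henum, Order.succ_le_iff]
  rw [← @Ordinal.typein_lt_typein TT (· < ·) isWellOrder_lt _ _] at h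
  exact h

theorem bdd_of_nat (hcofω : ℵ₀ < lam.ord.cof) (g : ℕ → TT) : ∃ b : TT, ∀ n, g n ≤ b := by
  have hlt : (⨆ n, (@Ordinal.typein TT (· < ·) isWellOrder_lt) (g n)) < lam.ord := by
    refine Ordinal.iSup_lt_ord ?_ fun n => Ordinal.typein_lt_self (g n)
    rwa [Cardinal.mk_nat]
  refine ⟨(@Ordinal.enum TT (· < ·) isWellOrder_lt) ⟨_, by rw [Ordinal.type_toType]; exact hlt⟩, fun n => ?_⟩
  rw [← Ordinal.typein_le_typein' lam.ord]
  have henum := @Ordinal.typein_enum TT (· < ·) isWellOrder_lt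
    (o := ⨆ n, (@Ordinal.typein TT (· < ·) isWellOrder_lt) (g n))
    (by rw [Ordinal.type_toType]; exact hlt)
  rw [henum]
  exact le_ciSup (Ordinal.bddAbove_range _) n

theorem tail_card (hinf : ℵ₀ < lam) (x₁ : TT) : lam ≤ #{x : TT // x₁ ≤ x} := by
  have hsplit : #TT ≤ #{x : TT // x < x₁} + #{x : TT // x₁ ≤ x} := by
    have : #TT ≤ #({x : TT // x < x₁} ⊕ {x : TT // x₁ ≤ x}) := by
      refine Cardinal.mk_le_of_injective (f := fun x =>
        if h : x < x₁ then Sum.inl ⟨x, h⟩ else Sum.inr ⟨x, le_of_not_gt h⟩) ?_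
      intro a b hab
      by_cases ha : a < x₁ <;> by_cases hb : b < x₁ <;>
        simp only [ha, hb, dite_true, dite_false, dif_pos, dif_neg, not_false_iff] at hab <;>
        first
          | exact congrArg Subtype.val (Sum.inl.inj hab)
          | exact congrArg Subtype.val (Sum.inr.inj hab)
          | exact absurd hab (by simp)
    rwa [Cardinal.mk_sum, Cardinal.lift_id, Cardinal.lift_id] at this
  have hTT : #TT = lam := by rw [Cardinal.mk_toType, Cardinal.card_ord]
  have hlt : #{x : TT // x < x₁} < lam := by
    have : #{x : TT // x < x₁} = ((@Ordinal.typein TT (· < ·) isWellOrder_lt) x₁).card :=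
      (@Ordinal.card_typein TT (· < ·) isWellOrder_lt x₁).symm
    rw [this]
    exact Cardinal.lt_ord.1 (Ordinal.typein_lt_self x₁)
  by_contra h
  push_neg at h
  have := lt_of_le_of_lt (hTT ▸ hsplit) (Cardinal.add_lt_of_lt hinf.le hlt h)
  exact lt_irrefl _ this

/-- The core contradiction: a `lam.ord`-chain eventually supported (mod constants)
on a finite set of coordinates is impossible. -/
theorem contra_tail (hinf : ℵ₀ < lam) (f : TT → MyB bl) (hf : StrictMono f) (hl : Order.IsSuccLimit lam.ord)
    (x₁ : TT) (u : Finset (PP kappa))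
    (hagree : ∀ x, x₁ ≤ x → ∀ ζ, ζ ∉ u → (f x).1 ζ = (f x₁).1 ζ) : False := by
  classical
  -- the target type
  set Z := Σ ζ : {ζ // ζ ∈ u}, YY bl ζ.1 with hZ
  -- cardinality of the target
  have hZcard : #Z < lam := by
    have h1 : #Z = Cardinal.sum (fun ζ : {ζ // ζ ∈ u} => #(YY bl ζ.1)) := Cardinal.mk_sigma _
    by_cases hu : u.Nonempty
    · set μ := u.sup bl.lamf with hμ
      have hμlt : μ < lam := by
        rw [hμ, Finset.sup_lt_iff (lt_of_le_of_lt zero_le hinf)]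
        exact fun ζ _ => bl.lt_lam ζ
      have h2 : Cardinal.sum (fun ζ : {ζ // ζ ∈ u} => #(YY bl ζ.1)) ≤
          Cardinal.sum (fun _ : {ζ // ζ ∈ u} => μ) := by
        refine Cardinal.sum_le_sum _ _ fun ζ => ?_
        rw [mk_YY]
        exact Finset.le_sup ζ.2
      rw [Cardinal.sum_const'] at h2
      have h3 : #{ζ // ζ ∈ u} * μ ≤ ℵ₀ * μ := by
        refine mul_le_mul' ?_ le_rfl
        rw [Cardinal.mk_coe_finset]
        exact (Cardinal.nat_lt_aleph0 _).le
      rw [h1]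
      exact lt_of_le_of_lt (h2.trans h3) (Cardinal.mul_lt_of_lt hinf.le hinf hμlt)
    · have : IsEmpty Z := by
        constructor
        rintro ⟨⟨ζ, hζ⟩, _⟩
        exact hu ⟨ζ, hζ⟩
      rw [Cardinal.mk_eq_zero Z]
      exact lt_of_le_of_lt zero_le hinf
  -- the pick function
  have hne : ∀ x : TT, x₁ ≤ x → ∃ p : Z, ((p.2 ∈ (f (nxt (lam := lam) hl x)).1 p.1.1) ∧
      p.2 ∉ (f x).1 p.1.1) := by
    intro x hx
    have hlt : f x < f (nxt hl x) := hf (lt_nxt hl x)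
    have hval : (f x).1 < (f (nxt hl x)).1 := (MyB.lt_iff bl).1 hlt
    obtain ⟨ζ, hζ⟩ := Function.ne_iff.1 hval.ne
    have hsub : (f x).1 ζ ⊆ (f (nxt hl x)).1 ζ := hval.le ζ
    have hζu : ζ ∈ u := by
      by_contra hζu
      have e1 := hagree x hx ζ hζu
      have e2 := hagree (nxt hl x) (hx.trans (lt_nxt hl x).le) ζ hζu
      exact hζ (e1.trans e2.symm)
    obtain ⟨y, hy1, hy2⟩ := Set.exists_of_ssubset (ssubset_of_subset_of_ne hsub hζ)
    exact ⟨⟨⟨ζ, hζu⟩, y⟩, hy1, hy2⟩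
  set pick : {x : TT // x₁ ≤ x} → Z := fun x => (hne x.1 x.2).choose with hpick
  have hinj : Function.Injective pick := by
    intro a b hab
    by_cases h : a.1 = b.1
    · exact Subtype.ext h
    exfalso
    rcases lt_or_gt_of_ne h with hlt | hlt
    · -- a < b
      have h1 := (hne a.1 a.2).choose_spec
      have h2 := (hne b.1 b.2).choose_spec
      have hmono : (f (nxt hl a.1)).1 (pick a).1.1 ⊆ (f b.1).1 (pick a).1.1 :=
        (hf.monotone (nxt_le hl hlt)) _
      have : (pick a).2 ∈ (f b.1).1 (pick a).1.1 := hmono h1.1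
      rw [hab] at this
      exact h2.2 this
    · have h1 := (hne a.1 a.2).choose_spec
      have h2 := (hne b.1 b.2).choose_spec
      have hmono : (f (nxt hl b.1)).1 (pick b).1.1 ⊆ (f a.1).1 (pick b).1.1 :=
        (hf.monotone (nxt_le hl hlt)) _
      have : (pick b).2 ∈ (f a.1).1 (pick b).1.1 := hmono h2.1
      rw [← hab] at this
      exact h1.2 this
  have := (tail_card hinf x₁).trans (Cardinal.mk_le_of_injective hinj)
  exact absurd (this.trans_lt hZcard) (lt_irrefl lam)

/-- `MyB bl` has no chain of length `lam`. -/
theorem no_lam_chain (hinf : ℵ₀ < lam) (hcofω : ℵ₀ < lam.ord.cof) (f : TT → MyB bl) (hf : StrictMono f) : False := by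
  classical
  have hl : Order.IsSuccLimit lam.ord := Cardinal.isSuccLimit_ord hinf.le
  haveI : Nonempty TT := Ordinal.nonempty_toType_iff.2 (hl.pos.ne')
  by_cases hfin : ∀ x : TT, {ζ | (f x).1 ζ ≠ ⊥}.Finite
  · -- all elements have finite support
    set s : TT → Finset (PP kappa) := fun x => (hfin x).toFinset with hs
    have hmono : ∀ {x y : TT}, x ≤ y → s x ⊆ s y := by
      intro x y hxy
      rw [hs]
      rw [Set.Finite.toFinset_subset_toFinset]
      intro ζ hζ
      simp only [mem_setOf_eq] at hζ ⊢
      intro hbot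
      have : (f x).1 ζ ⊆ (f y).1 ζ := (hf.monotone hxy) ζ
      rw [hbot] at this
      exact hζ (le_bot_iff.1 this)
    by_cases hbddc : ∃ N, ∀ x : TT, (s x).card ≤ N
    · obtain ⟨N, hN⟩ := hbddc
      have hNS : {n | ∃ x : TT, (s x).card = n}.Nonempty := ⟨_, Classical.arbitrary TT, rfl⟩
      have hNSb : BddAbove {n | ∃ x : TT, (s x).card = n} := by
        refine ⟨N, ?_⟩
        rintro n ⟨x, rfl⟩
        exact hN x
      obtain ⟨x₁, hx₁⟩ := Nat.sSup_mem hNS hNSb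
      refine contra_tail bl hinf f hf hl x₁ (s x₁) fun x hx ζ hζ => ?_
      have heq : s x = s x₁ := by
        refine (Finset.eq_of_subset_of_card_le (hmono hx) ?_).symm
        rw [hx₁]
        exact le_csSup hNSb ⟨x, rfl⟩
      have hζx : ζ ∉ s x := heq ▸ hζ
      have h1 : (f x).1 ζ = ⊥ := by
        by_contra h
        exact hζx (by rw [hs]; rw [Set.Finite.mem_toFinset]; exact h)
      have h2 : (f x₁).1 ζ = ⊥ := by
        by_contra h
        exact hζ (by rw [hs]; rw [Set.Finite.mem_toFinset]; exact h)
      rw [h1, h2]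
    · push_neg at hbddc
      have hg : ∀ n : ℕ, n < (s ((hbddc n).choose)).card := fun n => (hbddc n).choose_spec
      obtain ⟨b, hb⟩ := bdd_of_nat hcofω (fun n => (hbddc n).choose)
      have : ∀ n : ℕ, n < (s b).card := fun n =>
        lt_of_lt_of_le (hg n) (Finset.card_le_card (hmono (hb n)))
      exact lt_irrefl _ (this (s b).card)
  · -- some element has infinite support: eventually co-finite supports
    push_neg at hfin
    obtain ⟨x₀, hx₀⟩ := hfin
    have hcofin : ∀ x : TT, x₀ ≤ x → {ζ | (f x).1 ζ ≠ ⊤}.Finite := by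
      intro x hx
      rcases (f x).2 with h | h
      · exfalso
        refine hx₀ (h.subset fun ζ hζ => ?_)
        simp only [mem_setOf_eq] at hζ ⊢
        intro hbot
        have : (f x₀).1 ζ ⊆ (f x).1 ζ := (hf.monotone hx) ζ
        rw [hbot] at this
        exact hζ (le_bot_iff.1 this)
      · exact h
    have hanti : ∀ {x y : TT}, x₀ ≤ x → x ≤ y →
        {ζ | (f y).1 ζ ≠ ⊤} ⊆ {ζ | (f x).1 ζ ≠ ⊤} := by
      intro x y _ hxy ζ hζ
      simp only [mem_setOf_eq] at hζ ⊢
      intro htop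
      have : (f x).1 ζ ⊆ (f y).1 ζ := (hf.monotone hxy) ζ
      rw [htop] at this
      exact hζ (top_le_iff.1 (by exact this))
    have hNS : {n | ∃ x : TT, ∃ h : x₀ ≤ x, ((hcofin x h).toFinset).card = n}.Nonempty :=
      ⟨_, x₀, le_rfl, rfl⟩
    obtain ⟨x₁, hx₁, hcard⟩ := Nat.sInf_mem hNS
    refine contra_tail bl hinf f hf hl x₁ ((hcofin x₁ hx₁).toFinset) fun x hx ζ hζ => ?_
    have hxx₀ : x₀ ≤ x := hx₁.trans hx
    have heq : (hcofin x hxx₀).toFinset = (hcofin x₁ hx₁).toFinset := by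
      refine Finset.eq_of_subset_of_card_le ?_ ?_
      · rw [Set.Finite.toFinset_subset_toFinset]
        exact hanti hx₁ hx
      · rw [hcard]
        exact Nat.sInf_le ⟨x, hxx₀, rfl⟩
    have hζx : ζ ∉ (hcofin x hxx₀).toFinset := heq ▸ hζ
    have h1 : (f x).1 ζ = ⊤ := by
      by_contra h
      exact hζx (by rw [Set.Finite.mem_toFinset]; exact h)
    have h2 : (f x₁).1 ζ = ⊤ := by
      by_contra h
      exact hζ (by rw [Set.Finite.mem_toFinset]; exact h)
    rw [h1, h2]

end NoChain

end Stmt7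


namespace Stmt7

open Cardinal Set Ordinal

variable {kappa lam : Cardinal.{0}}

theorem depth_MyB (bl : Blocks kappa lam) (hinf : ℵ₀ < lam) (hcofω : ℵ₀ < lam.ord.cof) :
    DepthPlus (MyB bl) = lam := by
  refine depthPlus_eq_of_limit (fun θ hθ => hasChain_MyB bl hθ) ?_
  rintro ⟨f, hf⟩
  exact no_lam_chain bl hinf hcofω f hf

/-- A `kappa`-regular ultrafilter on the canonical type of size `kappa`. -/
theorem exists_regular_ultrafilter (hk : ℵ₀ ≤ kappa) :
    ∃ D : Ultrafilter kappa.ord.ToType, ∃ W : kappa.ord.ToType → Finset kappa.ord.ToType,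
      ∀ ζ, {i | ζ ∈ W i} ∈ D := by
  classical
  set II := kappa.ord.ToType with hII
  haveI : Infinite II := by
    rw [Cardinal.infinite_iff, Cardinal.mk_toType, Cardinal.card_ord]
    exact hk
  obtain ⟨E⟩ : Nonempty (II ≃ Finset II) := Cardinal.eq.1 (Cardinal.mk_finset_of_infinite II).symm
  set R : II → Set II := fun ζ => {i | ζ ∈ E i} with hR
  have hgen : (Filter.generate (Set.range R)).NeBot := by
    rw [Filter.generate_neBot_iff]
    intro t hsub hfin
    have hch : ∀ u ∈ t, ∃ ζ, R ζ = u := fun u hu => hsub hu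
    set F : Finset II := hfin.toFinset.attach.image
      (fun u => (hch u.1 (hfin.mem_toFinset.1 u.2)).choose) with hF
    refine ⟨E.symm F, ?_⟩
    intro u hu
    have hmem : (hch u hu).choose ∈ F := by
      rw [hF]
      exact Finset.mem_image.2 ⟨⟨u, hfin.mem_toFinset.2 hu⟩, Finset.mem_attach _ _, rfl⟩
    have hsp : E.symm F ∈ R (hch u hu).choose := by
      simp only [hR, mem_setOf_eq, Equiv.apply_symm_apply]
      exact hmem
    rwa [(hch u hu).choose_spec] at hsp
  refine ⟨@Ultrafilter.of _ (Filter.generate (Set.range R)) hgen, E, fun ζ => ?_⟩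
  exact (@Ultrafilter.of_le _ (Filter.generate (Set.range R)) hgen)
    (Filter.mem_generate_of_mem ⟨ζ, rfl⟩)

section BigChain

variable (bl : Blocks kappa lam)

/-- Embeddings of initial segments of `κ⁺` into `κ`. -/
noncomputable def eemb (ζ : PP kappa) : {ξ : PP kappa // ξ < ζ} ↪ kappa.ord.ToType := by
  have h1 : #{ξ : PP kappa // ξ < ζ} ≤ kappa := by
    have h2 : #{ξ : PP kappa // ξ < ζ} =
        (@Ordinal.typein (PP kappa) (· < ·) isWellOrder_lt ζ).card :=
      (@Ordinal.card_typein (PP kappa) (· < ·) isWellOrder_lt ζ).symm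
    have h3 : (@Ordinal.typein (PP kappa) (· < ·) isWellOrder_lt ζ) < (Order.succ kappa).ord := by
      have := @Ordinal.typein_lt_type (PP kappa) (· < ·) isWellOrder_lt ζ
      rwa [Ordinal.type_toType] at this
    rw [h2]
    exact Order.lt_succ_iff.1 (Cardinal.lt_ord.1 h3)
  have h4 : #{ξ : PP kappa // ξ < ζ} ≤ #(kappa.ord.ToType) := by
    rwa [Cardinal.mk_toType, Cardinal.card_ord]
  exact (Cardinal.le_def _ _).1 h4 |>.some

variable (W : kappa.ord.ToType → Finset kappa.ord.ToType)

/-- The basic finite sets given by regularity. -/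
noncomputable def A0 (ζ : PP kappa) (i : kappa.ord.ToType) : Finset {ξ : PP kappa // ξ < ζ} := by
  classical
  exact (W i).preimage (eemb ζ) ((eemb ζ).injective.injOn)

theorem mem_A0 {ζ : PP kappa} {ξ : {ξ : PP kappa // ξ < ζ}} {i} :
    ξ ∈ A0 W ζ i ↔ eemb ζ ξ ∈ W i := by
  classical
  simp [A0, Finset.mem_preimage]

/-- The coherent system of finite subsets, defined by recursion on `ζ`. -/
noncomputable def Sfun : PP kappa → kappa.ord.ToType → Finset (PP kappa) := by
  classical
  exact (IsWellFounded.wf (r := ((· < ·) : PP kappa → PP kappa → Prop))).fix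
    (fun ζ rec i =>
      ((A0 W ζ i).image Subtype.val) ∪ (A0 W ζ i).attach.biUnion (fun ξ => rec ξ.1.1 ξ.1.2 i))

theorem Sfun_eq (ζ : PP kappa) : Sfun W ζ = fun i =>
    ((A0 W ζ i).image Subtype.val) ∪ (A0 W ζ i).attach.biUnion (fun ξ => Sfun W ξ.1.1 i) := by
  classical
  rw [Sfun]
  rw [WellFounded.fix_eq]

theorem Sfun_lt {ζ : PP kappa} : ∀ {t : PP kappa} {i}, t ∈ Sfun W ζ i → t < ζ := by
  induction ζ using WellFoundedLT.induction with
  | _ ζ ih =>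
    intro t i ht
    rw [Sfun_eq] at ht
    rcases Finset.mem_union.1 ht with h | h
    · obtain ⟨ξ, _, rfl⟩ := Finset.mem_image.1 h
      exact ξ.2
    · obtain ⟨ξ, _, hmem⟩ := Finset.mem_biUnion.1 h
      exact lt_trans (ih ξ.1.1 ξ.1.2 hmem) ξ.1.2

theorem mem_Sfun_of_A0 {ζ : PP kappa} {ξ : {ξ : PP kappa // ξ < ζ}} {i}
    (h : ξ ∈ A0 W ζ i) : ξ.1 ∈ Sfun W ζ i := by
  rw [Sfun_eq]
  exact Finset.mem_union.2 (Or.inl (Finset.mem_image.2 ⟨ξ, h, rfl⟩))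

theorem Sfun_subset_of_A0 {ζ : PP kappa} {ξ : {ξ : PP kappa // ξ < ζ}} {i}
    (h : ξ ∈ A0 W ζ i) : Sfun W ξ.1 i ⊆ Sfun W ζ i := by
  intro t ht
  rw [Sfun_eq]
  refine Finset.mem_union.2 (Or.inr (Finset.mem_biUnion.2 ⟨⟨ξ, h⟩, Finset.mem_attach _ _, ht⟩))

end BigChain

end Stmt7


namespace Stmt7

open Cardinal Set Ordinal

variable {kappa lam : Cardinal.{0}}

theorem nonempty_toType {c : Cardinal.{0}} (h : c ≠ 0) : Nonempty c.ord.ToType := by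
  rw [Ordinal.nonempty_toType_iff]
  intro h0
  refine h ?_
  have := congrArg Ordinal.card h0
  rwa [Cardinal.card_ord, Ordinal.card_zero] at this

/-- Extraction of a cofinal family of small cardinals from the cofinality hypothesis. -/
theorem exists_blocks (hk : ℵ₀ ≤ kappa) (hcof : lam.ord.cof = Order.succ kappa)
    (hsing : Order.succ kappa < lam) : Nonempty (Blocks kappa lam) := by
  classical
  have haleph : ℵ₀ < lam := lt_of_le_of_lt (hk.trans (Order.le_succ kappa)) hsing
  obtain ⟨S, hSunb, hScard⟩ := Order.exists_cof_eq lam.ord.ToType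
  rw [Ordinal.cof_toType, hcof] at hScard
  have hPP : #(PP kappa) = Order.succ kappa := by
    rw [Cardinal.mk_toType, Cardinal.card_ord]
  obtain ⟨e⟩ : Nonempty (PP kappa ≃ S) := Cardinal.eq.1 (by rw [hPP, hScard])
  refine ⟨⟨fun ζ => ℵ₀ ⊔ ((@Ordinal.typein lam.ord.ToType (· < ·) isWellOrder_lt)
    ((e ζ : S) : lam.ord.ToType)).card, fun ζ => le_sup_left, fun ζ => ?_, fun θ hθ => ?_⟩⟩
  · refine sup_lt_iff.2 ⟨haleph, ?_⟩
    exact Cardinal.lt_ord.1 (Ordinal.typein_lt_self _)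
  · have hθo : θ.ord < lam.ord := Cardinal.ord_lt_ord.2 hθ
    set x : lam.ord.ToType := (@Ordinal.enum lam.ord.ToType (· < ·) isWellOrder_lt)
      ⟨θ.ord, by rw [Ordinal.type_toType]; exact hθo⟩ with hx
    obtain ⟨b, hbS, hnb⟩ := hSunb x
    refine ⟨e.symm ⟨b, hbS⟩, ?_⟩
    have hxb : x ≤ b := hnb
    have h1 : (@Ordinal.typein lam.ord.ToType (· < ·) isWellOrder_lt) x ≤
        (@Ordinal.typein lam.ord.ToType (· < ·) isWellOrder_lt) b :=
      (Ordinal.typein_le_typein' lam.ord).2 hxb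
    have h2 : (@Ordinal.typein lam.ord.ToType (· < ·) isWellOrder_lt) x = θ.ord := by
      rw [hx]
      exact @Ordinal.typein_enum lam.ord.ToType (· < ·) isWellOrder_lt θ.ord
        (by rw [Ordinal.type_toType]; exact hθo)
    rw [h2] at h1
    have h3 : θ ≤ ((@Ordinal.typein lam.ord.ToType (· < ·) isWellOrder_lt) b).card := by
      have := Ordinal.card_le_card h1
      rwa [Cardinal.card_ord] at this
    refine h3.trans ?_
    have heb : ((e (e.symm ⟨b, hbS⟩) : S) : lam.ord.ToType) = b := by
      rw [Equiv.apply_symm_apply]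
    show ((@Ordinal.typein lam.ord.ToType (· < ·) isWellOrder_lt) b).card ≤
      ℵ₀ ⊔ ((@Ordinal.typein lam.ord.ToType (· < ·) isWellOrder_lt)
        ((e (e.symm ⟨b, hbS⟩) : S) : lam.ord.ToType)).card
    rw [heb]
    exact le_sup_right

theorem lam_limit (hk : ℵ₀ ≤ kappa) (hcof : lam.ord.cof = Order.succ kappa)
    (hsing : Order.succ kappa < lam) (c : Cardinal.{0}) (hc : c < lam) : Order.succ c < lam := by
  by_contra h
  push_neg at h
  have heq : lam = Order.succ c := le_antisymm h (Order.succ_le_of_lt hc)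
  by_cases hac : ℵ₀ ≤ c
  · have h1 : lam.ord.cof = Order.succ c := by
      rw [heq]
      exact (Cardinal.isRegular_succ hac).cof_eq
    have h2 : Order.succ kappa = Order.succ c := by rw [← hcof, h1]
    rw [← h2] at heq
    rw [heq] at hsing
    exact lt_irrefl _ hsing
  · push_neg at hac
    have hb : Order.succ c ≤ ℵ₀ := Order.succ_le_of_lt hac
    have hlaleph : lam ≤ ℵ₀ := heq ▸ hb
    have : lam < lam := lt_of_le_of_lt hlaleph
      (lt_of_le_of_lt hk (lt_of_le_of_lt (Order.le_succ kappa) hsing))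
    exact lt_irrefl _ this

variable (bl : Blocks kappa lam)

/-- A witness point distinguishing two comparable elements of `MyB`. -/
theorem exists_witness {a b : MyB bl} (h : a < b) :
    ∃ p : Σ ζ : PP kappa, YY bl ζ, p.2 ∈ b.1 p.1 ∧ p.2 ∉ a.1 p.1 := by
  have hval : a.1 < b.1 := (MyB.lt_iff bl).1 h
  obtain ⟨ζ, hζ⟩ := Function.ne_iff.1 hval.ne
  obtain ⟨y, hy1, hy2⟩ := Set.exists_of_ssubset (ssubset_of_subset_of_ne (hval.le ζ) hζ)
  exact ⟨⟨ζ, y⟩, hy1, hy2⟩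

section BigChain2

variable (W : kappa.ord.ToType → Finset kappa.ord.ToType)

/-- The elements forming the long chain in the ultraproduct. -/
noncomputable def bigElem (ζ : PP kappa) (y : YY bl ζ) (i : kappa.ord.ToType) : MyB bl := by
  classical
  refine ⟨Function.update
      (fun ξ => if ξ ∈ Sfun W ζ i then (⊤ : Set (YY bl ξ)) else ⊥) ζ (Set.Iic y), ?_⟩
  refine Or.inl (((Sfun W ζ i).finite_toSet.union (Set.finite_singleton ζ)).subset
    fun ξ hξ => ?_)
  simp only [mem_setOf_eq] at hξ
  by_cases hξζ : ξ = ζ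
  · exact Or.inr (by simp [hξζ])
  · left
    simp only [Finset.coe_sort_coe, Finset.mem_coe]
    by_contra hmem
    exact hξ (by rw [Function.update_of_ne hξζ, if_neg hmem])

theorem bigElem_self {ζ : PP kappa} {y : YY bl ζ} {i} :
    (bigElem bl W ζ y i).1 ζ = Set.Iic y := by
  classical
  simp [bigElem, Function.update_self]

theorem bigElem_ne {ζ ξ : PP kappa} {y : YY bl ζ} {i} (h : ξ ≠ ζ) :
    (bigElem bl W ζ y i).1 ξ = if ξ ∈ Sfun W ζ i then (⊤ : Set (YY bl ξ)) else ⊥ := by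
  classical
  simp [bigElem, Function.update_of_ne h]

theorem bigElem_lt_same {ζ : PP kappa} {y y' : YY bl ζ} (h : y < y') (i) :
    bigElem bl W ζ y i < bigElem bl W ζ y' i := by
  rw [MyB.lt_iff]
  refine lt_of_le_of_ne (fun ξ => ?_) ?_
  · by_cases hξζ : ξ = ζ
    · subst hξζ
      rw [bigElem_self, bigElem_self]
      exact Set.Iic_subset_Iic.2 h.le
    · rw [bigElem_ne bl W hξζ, bigElem_ne bl W hξζ]
  · intro heq
    have := congrFun heq ζ
    rw [bigElem_self, bigElem_self] at this
    have hy' : y' ∈ Set.Iic y := this ▸ Set.mem_Iic.2 le_rfl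
    exact absurd (Set.mem_Iic.1 hy') (not_le.2 h)

theorem bigElem_lt_cross {ξ ζ : PP kappa} (hξζ : ξ < ζ) (γ : YY bl ξ) (y : YY bl ζ)
    {i} (hA : (⟨ξ, hξζ⟩ : {x : PP kappa // x < ζ}) ∈ A0 W ζ i) :
    bigElem bl W ξ γ i < bigElem bl W ζ y i := by
  rw [MyB.lt_iff]
  refine lt_of_le_of_ne (fun t => ?_) ?_
  · by_cases htξ : t = ξ
    · subst htξ
      rw [bigElem_self, bigElem_ne bl W (ne_of_lt hξζ), if_pos (mem_Sfun_of_A0 W hA)]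
      exact le_top
    · rw [bigElem_ne bl W htξ]
      by_cases hmem : t ∈ Sfun W ξ i
      · have ht1 : t ∈ Sfun W ζ i := Sfun_subset_of_A0 W hA hmem
        have ht2 : t ≠ ζ := ne_of_lt (lt_trans (Sfun_lt W hmem) hξζ)
        rw [if_pos hmem, bigElem_ne bl W ht2, if_pos ht1]
      · rw [if_neg hmem]
        exact bot_le
  · intro heq
    have := congrFun heq ζ
    rw [bigElem_self, bigElem_ne bl W (ne_of_gt hξζ)] at this
    have hζS : ζ ∉ Sfun W ξ i := fun hmem => absurd (Sfun_lt W hmem) (asymm hξζ)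
    rw [if_neg hζS] at this
    have : y ∈ (⊥ : Set (YY bl ζ)) := this ▸ Set.mem_Iic.2 le_rfl
    exact this

variable (D : Ultrafilter kappa.ord.ToType)

/-- The chain map from the lexicographic sum into the ultraproduct. -/
noncomputable def Phi (q : Σₗ ζ : PP kappa, YY bl ζ) :
    UltraProd D (fun _ : kappa.ord.ToType => MyB bl) :=
  UltraProd.mk D _ (fun i => bigElem bl W (Sigma.fst (ofLex q)) (Sigma.snd (ofLex q)) i)

theorem Phi_strictMono (hreg : ∀ ζ, {i | ζ ∈ W i} ∈ D) :
    StrictMono (Phi bl W D) := by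
  intro q q' hq
  have hlex : Sigma.Lex ((· < ·) : PP kappa → PP kappa → Prop)
      (fun ζ => ((· < ·) : YY bl ζ → YY bl ζ → Prop)) (ofLex q) (ofLex q') := hq
  rw [Phi, Phi, UltraProd.mk_lt_mk]
  generalize hp : ofLex q = p at hlex ⊢
  generalize hp' : ofLex q' = p' at hlex ⊢
  cases hlex with
  | @left ζ ζ' a b hab =>
    have hA : {i | (⟨ζ, hab⟩ : {x : PP kappa // x < ζ'}) ∈ A0 W ζ' i} ∈ D := by
      have : {i | (⟨ζ, hab⟩ : {x : PP kappa // x < ζ'}) ∈ A0 W ζ' i} =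
          {i | eemb ζ' ⟨ζ, hab⟩ ∈ W i} := by
        ext i
        simp only [mem_setOf_eq, mem_A0]
      rw [this]
      exact hreg _
    refine Filter.mem_of_superset hA fun i hi => ?_
    exact bigElem_lt_cross bl W hab a b hi
  | @right ζ a b hab =>
    refine Filter.univ_mem' fun i => ?_
    exact bigElem_lt_same bl W hab i

theorem wf_lex : WellFounded ((· < ·) : (Σₗ ζ : PP kappa, YY bl ζ) → _ → Prop) := by
  have hw : WellFounded (PSigma.Lex ((· < ·) : PP kappa → PP kappa → Prop)
      (fun ζ => ((· < ·) : YY bl ζ → YY bl ζ → Prop))) :=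
    WellFounded.psigma_lex (IsWellFounded.wf) (fun ζ => IsWellFounded.wf)
  have hIm := InvImage.wf
    (fun q : Σₗ ζ : PP kappa, YY bl ζ => (⟨(ofLex q).1, (ofLex q).2⟩ : Σ' ζ, YY bl ζ)) hw
  refine Subrelation.wf ?_ hIm
  intro q q' hq
  have hlex : Sigma.Lex ((· < ·) : PP kappa → PP kappa → Prop)
      (fun ζ => ((· < ·) : YY bl ζ → YY bl ζ → Prop)) (ofLex q) (ofLex q') := hq
  have key : ∀ p p' : Σ ζ : PP kappa, YY bl ζ,
      Sigma.Lex ((· < ·) : PP kappa → PP kappa → Prop)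
        (fun ζ => ((· < ·) : YY bl ζ → YY bl ζ → Prop)) p p' →
      PSigma.Lex ((· < ·) : PP kappa → PP kappa → Prop)
        (fun ζ => ((· < ·) : YY bl ζ → YY bl ζ → Prop)) ⟨p.1, p.2⟩ ⟨p'.1, p'.2⟩ := by
    intro p p' h
    cases h with
    | @left ζ ζ' a b hab => exact PSigma.Lex.left _ _ hab
    | @right ζ a b hab => exact PSigma.Lex.right _ hab
  exact key _ _ hlex

theorem mk_sigma_YY : #(Σ ζ : PP kappa, YY bl ζ) = Cardinal.sum (fun ζ => bl.lamf ζ) := by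
  rw [Cardinal.mk_sigma]
  congr 1
  funext ζ
  exact mk_YY bl ζ

theorem mk_sigma_le (hk : ℵ₀ ≤ kappa) (hsing : Order.succ kappa < lam) :
    #(Σ ζ : PP kappa, YY bl ζ) ≤ lam := by
  rw [mk_sigma_YY]
  have h1 : Cardinal.sum (fun ζ => bl.lamf ζ) ≤ Cardinal.sum (fun _ : PP kappa => lam) :=
    Cardinal.sum_le_sum _ _ fun ζ => (bl.lt_lam ζ).le
  rw [Cardinal.sum_const'] at h1
  have hPP : #(PP kappa) = Order.succ kappa := by
    rw [Cardinal.mk_toType, Cardinal.card_ord]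
  rw [hPP] at h1
  have haleph : ℵ₀ < lam := lt_of_le_of_lt (hk.trans (Order.le_succ kappa)) hsing
  have h2 : Order.succ kappa * lam = lam := by
    rw [Cardinal.mul_eq_max (hk.trans (Order.le_succ kappa)) haleph.le]
    exact max_eq_right hsing.le
  rwa [h2] at h1

theorem lam_le_mk_sigma (hk : ℵ₀ ≤ kappa) (hcof : lam.ord.cof = Order.succ kappa)
    (hsing : Order.succ kappa < lam) : lam ≤ #(Σ ζ : PP kappa, YY bl ζ) := by
  refine le_of_forall_lt fun c hc => ?_
  obtain ⟨ζ, hζ⟩ := bl.cofinal (Order.succ c) (lam_limit hk hcof hsing c hc)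
  have h1 : Order.succ c ≤ #(Σ ζ : PP kappa, YY bl ζ) := by
    refine hζ.trans ?_
    rw [← mk_YY bl ζ]
    exact Cardinal.mk_le_of_injective (f := fun y => ⟨ζ, y⟩) sigma_mk_injective
  exact lt_of_lt_of_le (Order.lt_succ c) h1

/-- The ultraproduct contains a chain of length `lam`. -/
theorem hasChain_ultraprod (hreg : ∀ ζ, {i | ζ ∈ W i} ∈ D) (hk : ℵ₀ ≤ kappa)
    (hcof : lam.ord.cof = Order.succ kappa) (hsing : Order.succ kappa < lam) :
    HasChain (UltraProd D (fun _ : kappa.ord.ToType => MyB bl)) lam := by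
  haveI : WellFoundedLT (Σₗ ζ : PP kappa, YY bl ζ) := ⟨wf_lex bl⟩
  have hord : lam.ord ≤ Ordinal.type ((· < ·) : (Σₗ ζ : PP kappa, YY bl ζ) → _ → Prop) := by
    rw [Cardinal.ord_le, Ordinal.card_type]
    have : #(Σₗ ζ : PP kappa, YY bl ζ) = #(Σ ζ : PP kappa, YY bl ζ) :=
      Cardinal.mk_congr (toLex : (Σ ζ : PP kappa, YY bl ζ) ≃ _).symm
    rw [this]
    exact lam_le_mk_sigma bl hk hcof hsing
  rw [← Ordinal.type_toType lam.ord] at hord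
  obtain ⟨emb⟩ := (@Ordinal.type_le_iff' lam.ord.ToType (Σₗ ζ : PP kappa, YY bl ζ)
    (· < ·) (· < ·) isWellOrder_lt isWellOrder_lt).1 hord
  refine ⟨fun x => Phi bl W D (emb x), fun x x' hx => ?_⟩
  exact Phi_strictMono bl W D hreg (emb.map_rel_iff.2 hx)

end BigChain2

end Stmt7


namespace Stmt7

open Cardinal Set Ordinal

variable {kappa lam : Cardinal.{0}}

theorem up_le (D : Ultrafilter kappa.ord.ToType) {T : Type} (hT : #T ≤ lam)
    (hpow : lam ^ kappa = lam) : #(UltraProd D (fun _ : kappa.ord.ToType => T)) ≤ lam := by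
  have h1 : #(UltraProd D (fun _ : kappa.ord.ToType => T)) ≤ #(∀ _ : kappa.ord.ToType, T) :=
    Cardinal.mk_le_of_surjective (f := Quotient.mk _) (fun q => ⟨q.out, Quotient.out_eq q⟩)
  rw [Cardinal.mk_pi, Cardinal.prod_const'] at h1
  have hι : #(kappa.ord.ToType) = kappa := by rw [Cardinal.mk_toType, Cardinal.card_ord]
  rw [hι] at h1
  refine h1.trans ?_
  calc #T ^ kappa ≤ lam ^ kappa := Cardinal.power_le_power_right hT
  _ = lam := hpow

theorem diag_le (D : Ultrafilter kappa.ord.ToType) {T : Type} [PartialOrder T] :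
    Cardinal.mk T ≤ #(UltraProd D (fun _ : kappa.ord.ToType => T)) := by
  refine Cardinal.mk_le_of_injective (f := fun x => UltraProd.mk D _ (fun _ => x)) ?_
  intro x y h
  by_contra hxy
  have h1 := UltraProd.mk_eq_mk.1 h
  have h2 : {i : kappa.ord.ToType | x = y} = ∅ := by
    ext i
    simp [hxy]
  rw [h2] at h1
  exact Ultrafilter.empty_notMem h1

theorem up_card_eq (D : Ultrafilter kappa.ord.ToType) (hpow : lam ^ kappa = lam) :
    ultraprodCard D (fun _ : kappa.ord.ToType => lam) = lam := by
  refine le_antisymm (up_le D ?_ hpow) ?_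
  · rw [Cardinal.mk_toType, Cardinal.card_ord]
  · have := diag_le (T := lam.ord.ToType) D
    rwa [Cardinal.mk_toType, Cardinal.card_ord] at this

theorem chain_le (bl : Blocks kappa lam) (D : Ultrafilter kappa.ord.ToType)
    (hpow : lam ^ kappa = lam) (hk : ℵ₀ ≤ kappa) (hsing : Order.succ kappa < lam)
    (θ : Cardinal.{0}) (hc : HasChain (UltraProd D (fun _ : kappa.ord.ToType => MyB bl)) θ) :
    θ ≤ lam := by
  classical
  have haleph : ℵ₀ < lam := lt_of_le_of_lt (hk.trans (Order.le_succ kappa)) hsing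
  by_cases hθa : ℵ₀ ≤ θ
  swap
  · push_neg at hθa
    exact (hθa.trans haleph).le
  obtain ⟨f, hf⟩ := hc
  set V := UltraProd D (fun _ : kappa.ord.ToType => (Σ ζ : PP kappa, YY bl ζ)) with hV
  suffices hθV : θ ≤ #V by
    exact hθV.trans (up_le D (mk_sigma_le bl hk hsing) hpow)
  have hl : Order.IsSuccLimit θ.ord := Cardinal.isSuccLimit_ord hθa
  haveI hne : Nonempty (Σ ζ : PP kappa, YY bl ζ) := by
    have h1 : Nonempty (PP kappa) := nonempty_toType
      (ne_of_gt (lt_of_le_of_lt zero_le (Order.lt_succ kappa)))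
    obtain ⟨ζ⟩ := h1
    obtain ⟨y⟩ := YY_nonempty bl ζ
    exact ⟨⟨ζ, y⟩⟩
  set g : θ.ord.ToType → ∀ _ : kappa.ord.ToType, MyB bl := fun x => Quotient.out (f x) with hg
  have hout : ∀ x, UltraProd.mk D _ (g x) = f x := fun x => Quotient.out_eq _
  have hlt : ∀ {x x' : θ.ord.ToType}, x < x' → {i | g x i < g x' i} ∈ D := by
    intro x x' hxx
    have h2 := hf hxx
    rw [← hout x, ← hout x'] at h2
    exact UltraProd.mk_lt_mk.1 h2
  have hle : ∀ {x x' : θ.ord.ToType}, x ≤ x' → {i | g x i ≤ g x' i} ∈ D := by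
    intro x x' hxx
    have h2 := hf.monotone hxx
    rw [← hout x, ← hout x'] at h2
    exact h2
  set pfun : θ.ord.ToType → ∀ _ : kappa.ord.ToType, (Σ ζ : PP kappa, YY bl ζ) := fun x i =>
    if h : g x i < g (nxt hl x) i then (exists_witness bl h).choose
    else Classical.arbitrary _ with hpfun
  have key : ∀ {x x' : θ.ord.ToType}, x < x' →
      UltraProd.mk D _ (pfun x) ≠ UltraProd.mk D _ (pfun x') := by
    intro x x' hxx heq
    have hEq := UltraProd.mk_eq_mk.1 heq
    have hE1 := hlt (lt_nxt hl x)
    have hE2 := hle (nxt_le hl hxx)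
    have hE3 := hlt (lt_nxt hl x')
    obtain ⟨i, hi⟩ := Filter.nonempty_of_mem
      (Filter.inter_mem (Filter.inter_mem hE1 hE2) (Filter.inter_mem hE3 hEq))
    obtain ⟨⟨hi1, hi2⟩, hi3, hi4⟩ := hi
    have hi1' : g x i < g (nxt hl x) i := hi1
    have hi2' : g (nxt hl x) i ≤ g x' i := hi2
    have hi3' : g x' i < g (nxt hl x') i := hi3
    have hi4' : pfun x i = pfun x' i := hi4
    have hpx : pfun x i = (exists_witness bl hi1').choose := by
      simp only [hpfun]
      rw [dif_pos hi1']
    have hpx' : pfun x' i = (exists_witness bl hi3').choose := by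
      simp only [hpfun]
      rw [dif_pos hi3']
    have hw1 := (exists_witness bl hi1').choose_spec
    have hw3 := (exists_witness bl hi3').choose_spec
    have hmem : (pfun x i).2 ∈ (g x' i).1 (pfun x i).1 := by
      rw [hpx]
      exact ((MyB.le_iff bl).1 hi2' _) hw1.1
    rw [hi4', hpx'] at hmem
    exact hw3.2 hmem
  have hinj : Function.Injective (fun x => UltraProd.mk D _ (pfun x)) := by
    intro x x' h
    rcases lt_trichotomy x x' with hlt' | heq' | hgt'
    · exact absurd h (key hlt')
    · exact heq'
    · exact absurd h.symm (key hgt')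
  have h3 : #(θ.ord.ToType) ≤ #V := Cardinal.mk_le_of_injective hinj
  rwa [Cardinal.mk_toType, Cardinal.card_ord] at h3

end Stmt7

theorem stmt7 (κ lam : Cardinal.{0}) (hκ : κ.IsRegular)
    (hcof : lam.ord.cof = Order.succ κ) (hsing : Order.succ κ < lam)
    (hpow : lam ^ κ = lam) :
    ∃ (B : κ.ord.ToType → Type) (_ : ∀ i, BooleanAlgebra (B i))
      (D : Ultrafilter κ.ord.ToType),
      ultraprodCard D (fun i => DepthPlus (B i)) = lam ∧
      DepthPlus (UltraProd D B) = Order.succ lam := by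
  have hk0 : ℵ₀ ≤ κ := hκ.aleph0_le
  have haleph : ℵ₀ < lam := lt_of_le_of_lt (hk0.trans (Order.le_succ _)) hsing
  have hcofω : ℵ₀ < lam.ord.cof := by
    rw [hcof]
    exact lt_of_le_of_lt hk0 (Order.lt_succ _)
  obtain ⟨bl⟩ := Stmt7.exists_blocks hk0 hcof hsing
  obtain ⟨D, W, hreg⟩ := Stmt7.exists_regular_ultrafilter hk0
  refine ⟨fun _ => Stmt7.MyB bl, fun _ => Stmt7.MyB.instBA bl, D, ?_, ?_⟩
  · have hd : (fun _ : κ.ord.ToType => DepthPlus (Stmt7.MyB bl)) =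
        (fun _ : κ.ord.ToType => lam) := by
      funext i
      exact Stmt7.depth_MyB bl haleph hcofω
    show ultraprodCard D (fun _ : κ.ord.ToType => DepthPlus (Stmt7.MyB bl)) = lam
    rw [hd]
    exact Stmt7.up_card_eq D hpow
  · refine le_antisymm ?_ ?_
    · refine depthPlus_le_of_forall fun θ hθ => ?_
      exact Order.succ_le_succ (Stmt7.chain_le bl D hpow hk0 hsing θ hθ)
    · exact succ_le_depthPlus_of_hasChain
        (Stmt7.hasChain_ultraprod bl W D hreg hk0 hcof hsing)
end
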